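/- arXiv:2311.16523 — 5 statements merged into one kernel-verified Lean document; each statement's English description precedes it below -/
import Mathlib

section
/- If z^c = σ^c e^{jθ^c} and z^b = σ^b e^{jθ^b} are nonzero complex numbers with θ^c - θ^b ∈ [0, 2π), and z^x = z^c - z^b is nonzero, then an argument θ^x of z^x lies in the interval [min{θ^c, θ^b + π}, max{θ^c, θ^b + π}]. -/
open Matrix Complex

noncomputable section

/-- The numerical range of a complex square matrix. -/
def numRange {ι : Type*} [Fintype ι] (C : Matrix ι ι ℂ) : Set ℂ :=
  {z | ∃ x : ι → ℂ, star x ⬝ᵥ x = 1 ∧ star x ⬝ᵥ C.mulVec x = z}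

/-- A matrix is sectorial if its numerical range does not contain 0. -/
def Sectorial {ι : Type*} [Fintype ι] (C : Matrix ι ι ℂ) : Prop :=
  (0 : ℂ) ∉ numRange C

/-- `PhasesIn C α β` : `C` admits a sectorial decomposition `C = Tᴴ D T` with `T`
invertible and `D` diagonal unitary whose diagonal entries have arguments in `[α, β]`. -/
def PhasesIn {ι : Type*} [Fintype ι] [DecidableEq ι] (C : Matrix ι ι ℂ) (α β : ℝ) : Prop :=
  ∃ T D : Matrix ι ι ℂ, IsUnit T ∧ D.IsDiag ∧ C = Tᴴ * D * T ∧
    ∀ i, ∃ θ : ℝ, α ≤ θ ∧ θ ≤ β ∧ D i i = Complex.exp ((θ : ℂ) * Complex.I)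

/-- `C ∈ Z[α, β]` : sectorial with all phases in `[α, β]`. -/
def MemZ {ι : Type*} [Fintype ι] [DecidableEq ι] (C : Matrix ι ι ℂ) (α β : ℝ) : Prop :=
  Sectorial C ∧ PhasesIn C α β

/-- The closed sector `{r e^{jθ} : r ≥ 0, α ≤ θ ≤ β}` in the complex plane. -/
def sector (α β : ℝ) : Set ℂ :=
  {z | ∃ r θ : ℝ, 0 ≤ r ∧ α ≤ θ ∧ θ ≤ β ∧ z = (r : ℂ) * Complex.exp ((θ : ℂ) * Complex.I)}


lemma sum_two_phases (α β r s : ℝ) (hαβ : α ≤ β) (hπ : β - α ≤ Real.pi)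
    (hr : 0 < r) (hs : 0 < s)
    (hz : (r : ℂ) * Complex.exp ((α : ℂ) * I) + (s : ℂ) * Complex.exp ((β : ℂ) * I) ≠ 0) :
    ∃ θ : ℝ, α ≤ θ ∧ θ ≤ β ∧
      (r : ℂ) * Complex.exp ((α : ℂ) * I) + (s : ℂ) * Complex.exp ((β : ℂ) * I)
        = (‖(r : ℂ) * Complex.exp ((α : ℂ) * I) + (s : ℂ) * Complex.exp ((β : ℂ) * I)‖ : ℂ)
          * Complex.exp ((θ : ℂ) * I) := by
  set z : ℂ := (r : ℂ) * Complex.exp ((α : ℂ) * I) + (s : ℂ) * Complex.exp ((β : ℂ) * I) with hzdef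
  set m : ℝ := (α + β) / 2 with hm
  set δ : ℝ := (β - α) / 2 with hd
  have hδ0 : 0 ≤ δ := by rw [hd]; linarith
  have hδπ : δ ≤ Real.pi / 2 := by rw [hd]; linarith
  set w : ℂ := z * Complex.exp (((-m : ℝ) : ℂ) * I) with hwdef
  have key : ∀ x : ℝ, Complex.exp ((x : ℂ) * I) * Complex.exp (((-m : ℝ) : ℂ) * I)
      = Complex.exp (((x - m : ℝ) : ℂ) * I) := by
    intro x; rw [← Complex.exp_add]; push_cast; ring_nf
  have hαm : α - m = -δ := by rw [hm, hd]; ring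
  have hβm : β - m = δ := by rw [hm, hd]; ring
  have hwe : w = (r : ℂ) * Complex.exp (((-δ : ℝ) : ℂ) * I) + (s : ℂ) * Complex.exp ((δ : ℂ) * I) := by
    rw [hwdef, hzdef, add_mul, mul_assoc, mul_assoc, key α, key β, hαm, hβm]
  have e1re : (Complex.exp (((-δ : ℝ) : ℂ) * I)).re = Real.cos δ := by
    rw [Complex.exp_ofReal_mul_I_re, Real.cos_neg]
  have e1im : (Complex.exp (((-δ : ℝ) : ℂ) * I)).im = -Real.sin δ := by
    rw [Complex.exp_ofReal_mul_I_im, Real.sin_neg]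
  have e2re : (Complex.exp (((δ : ℝ) : ℂ) * I)).re = Real.cos δ := Complex.exp_ofReal_mul_I_re δ
  have e2im : (Complex.exp (((δ : ℝ) : ℂ) * I)).im = Real.sin δ := Complex.exp_ofReal_mul_I_im δ
  have hwre : w.re = (r + s) * Real.cos δ := by
    rw [hwe]
    simp only [Complex.add_re, Complex.mul_re, Complex.ofReal_re, Complex.ofReal_im,
      e1re, e1im, e2re, e2im]
    ring
  have hwim : w.im = (s - r) * Real.sin δ := by
    rw [hwe]
    simp only [Complex.add_im, Complex.mul_im, Complex.ofReal_re, Complex.ofReal_im,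
      e1re, e1im, e2re, e2im]
    ring
  have hw0 : w ≠ 0 := by
    rw [hwdef]; exact mul_ne_zero hz (Complex.exp_ne_zero _)
  have hwre0 : 0 ≤ w.re := by
    rw [hwre]
    exact mul_nonneg (by linarith) (Real.cos_nonneg_of_mem_Icc ⟨by linarith, hδπ⟩)
  have harg1 : Complex.arg w ≤ δ ∧ -δ ≤ Complex.arg w := by
    rcases lt_or_eq_of_le hδπ with hlt | heq
    · have hcos : 0 < Real.cos δ := Real.cos_pos_of_mem_Ioo ⟨by linarith, hlt⟩
      have hre : 0 < w.re := by rw [hwre]; positivity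
      have habs : |Complex.arg w| < Real.pi / 2 :=
        Complex.abs_arg_lt_pi_div_two_iff.mpr (Or.inl hre)
      rw [abs_lt] at habs
      have hsin : 0 ≤ Real.sin δ :=
        Real.sin_nonneg_of_nonneg_of_le_pi hδ0 (by linarith [Real.pi_pos])
      have htanval : Real.tan (Complex.arg w) = (s - r) * Real.sin δ / ((r + s) * Real.cos δ) := by
        rw [Complex.tan_arg, hwre, hwim]
      have htan2 : Real.tan (Complex.arg w) ≤ Real.tan δ := by
        rw [htanval, Real.tan_eq_sin_div_cos, div_le_div_iff₀ (by positivity) hcos]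
        nlinarith [mul_nonneg hsin hcos.le, mul_nonneg (mul_nonneg hr.le hsin) hcos.le]
      have htan1 : Real.tan (-δ) ≤ Real.tan (Complex.arg w) := by
        rw [htanval, Real.tan_neg, Real.tan_eq_sin_div_cos, ← neg_div,
          div_le_div_iff₀ hcos (by positivity)]
        nlinarith [mul_nonneg hsin hcos.le, mul_nonneg (mul_nonneg hs.le hsin) hcos.le]
      constructor
      · by_contra hcon
        push_neg at hcon
        have := Real.strictMonoOn_tan ⟨by linarith, hlt⟩ ⟨habs.1, habs.2⟩ hcon
        linarith
      · by_contra hcon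
        push_neg at hcon
        have := Real.strictMonoOn_tan ⟨habs.1, habs.2⟩ ⟨by linarith, by linarith⟩ hcon
        linarith
    · have h := Complex.abs_arg_le_pi_div_two_iff.mpr hwre0
      rw [abs_le] at h
      exact ⟨by rw [heq]; exact h.2, by rw [heq]; exact h.1⟩
  refine ⟨m + Complex.arg w, ?_, ?_, ?_⟩
  · have : m - δ = α := by rw [hm, hd]; ring
    linarith [harg1.2]
  · have : m + δ = β := by rw [hm, hd]; ring
    linarith [harg1.1]
  · have habs : ‖w‖ = ‖z‖ := by
      rw [hwdef, norm_mul, Complex.norm_exp_ofReal_mul_I, mul_one]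
    have hzw : z = w * Complex.exp ((m : ℂ) * I) := by
      rw [hwdef, mul_assoc, ← Complex.exp_add]
      have : ((-m : ℝ) : ℂ) * I + (m : ℂ) * I = 0 := by push_cast; ring
      rw [this, Complex.exp_zero, mul_one]
    have hwexp : w = (‖z‖ : ℂ) * Complex.exp ((Complex.arg w : ℂ) * I) := by
      rw [← habs]; exact (Complex.norm_mul_exp_arg_mul_I w).symm
    have hexp : ((Complex.arg w : ℝ) : ℂ) * I + (m : ℂ) * I
        = ((m + Complex.arg w : ℝ) : ℂ) * I := by push_cast; ring
    calc z = w * Complex.exp ((m : ℂ) * I) := hzw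
      _ = ((‖z‖ : ℂ) * Complex.exp ((Complex.arg w : ℂ) * I))
            * Complex.exp ((m : ℂ) * I) := by rw [← hwexp]
      _ = (‖z‖ : ℂ) * Complex.exp (((m + Complex.arg w : ℝ) : ℂ) * I) := by
            rw [mul_assoc, ← Complex.exp_add, hexp]

theorem phase_of_difference_of_scalars (zc zb : ℂ) (θc θb : ℝ)
    (hc : zc ≠ 0) (hb : zb ≠ 0)
    (hpc : zc = (‖zc‖ : ℂ) * Complex.exp ((θc : ℂ) * Complex.I))
    (hpb : zb = (‖zb‖ : ℂ) * Complex.exp ((θb : ℂ) * Complex.I))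
    (hθlo : 0 ≤ θc - θb) (hθhi : θc - θb < 2 * Real.pi)
    (hx : zc - zb ≠ 0) :
    ∃ θx : ℝ, zc - zb = (‖zc - zb‖ : ℂ) * Complex.exp ((θx : ℂ) * Complex.I) ∧
      min θc (θb + Real.pi) ≤ θx ∧ θx ≤ max θc (θb + Real.pi) := by
  have hrc : 0 < ‖zc‖ := norm_pos_iff.mpr hc
  have hrb : 0 < ‖zb‖ := norm_pos_iff.mpr hb
  have hexpb : Complex.exp (((θb + Real.pi : ℝ) : ℂ) * I) = -Complex.exp ((θb : ℂ) * I) := by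
    push_cast
    rw [add_mul, Complex.exp_add, Complex.exp_pi_mul_I]
    ring
  have hsum : zc - zb = (‖zc‖ : ℂ) * Complex.exp ((θc : ℂ) * I)
      + (‖zb‖ : ℂ) * Complex.exp (((θb + Real.pi : ℝ) : ℂ) * I) := by
    rw [hexpb]
    nth_rewrite 1 [hpc, hpb]
    ring
  rcases le_or_gt θc (θb + Real.pi) with h | h
  · have hz : (‖zc‖ : ℂ) * Complex.exp ((θc : ℂ) * I)
        + (‖zb‖ : ℂ) * Complex.exp (((θb + Real.pi : ℝ) : ℂ) * I) ≠ 0 := by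
      rw [← hsum]; exact hx
    obtain ⟨θ, h1, h2, h3⟩ := sum_two_phases θc (θb + Real.pi) (‖zc‖)
      (‖zb‖) h (by linarith) hrc hrb hz
    refine ⟨θ, ?_, le_trans (min_le_left _ _) h1, le_trans h2 (le_max_right _ _)⟩
    rw [hsum]
    nth_rewrite 1 [h3]
    rw [← hsum]
  · have hz : (‖zb‖ : ℂ) * Complex.exp (((θb + Real.pi : ℝ) : ℂ) * I)
        + (‖zc‖ : ℂ) * Complex.exp ((θc : ℂ) * I) ≠ 0 := by
      rw [add_comm, ← hsum]; exact hx
    obtain ⟨θ, h1, h2, h3⟩ := sum_two_phases (θb + Real.pi) θc (‖zb‖)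
      (‖zc‖) h.le (by linarith) hrb hrc hz
    refine ⟨θ, ?_, le_trans (min_le_right _ _) h1, le_trans h2 (le_max_left _ _)⟩
    rw [hsum, add_comm ((‖zc‖ : ℂ) * _)]
    nth_rewrite 1 [h3]
    rw [add_comm ((‖zb‖ : ℂ) * _), ← hsum]
end
end

section
/- Let Z ∈ ℂ^{n×n} be sectorial with phases in [α, β], partitioned as Z = [[Z₁₁, Z₁₂],[Z₂₁, Z₂₂]] with Z₂₂ square; then Z₂₂ is invertible and the Schur complement Z/₂₂ = Z₁₁ − Z₁₂ Z₂₂⁻¹ Z₂₁ is sectorial with phases in [α, β]. -/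
open Matrix Complex

noncomputable section

namespace SchurAux
open scoped ComplexOrder
set_option linter.unusedSectionVars false


set_option linter.unusedSectionVars false
variable {ι : Type*} [Fintype ι] [DecidableEq ι]

/-- quadratic form -/
def qf (A : Matrix ι ι ℂ) (x : ι → ℂ) : ℂ := star x ⬝ᵥ A *ᵥ x

lemma qf_mulVec (A B : Matrix ι ι ℂ) (v : ι → ℂ) :
    qf A (B *ᵥ v) = qf (Bᴴ * A * B) v := by
  unfold qf
  rw [star_mulVec, dotProduct_mulVec, vecMul_vecMul, ← dotProduct_mulVec]
  rw [mulVec_mulVec]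

lemma qf_smul (c : ℂ) (A : Matrix ι ι ℂ) (x : ι → ℂ) : qf (c • A) x = c * qf A x := by
  unfold qf
  rw [smul_mulVec, dotProduct_smul, smul_eq_mul]

lemma qf_add (A B : Matrix ι ι ℂ) (x : ι → ℂ) : qf (A + B) x = qf A x + qf B x := by
  unfold qf; rw [add_mulVec, dotProduct_add]

lemma qf_sub (A B : Matrix ι ι ℂ) (x : ι → ℂ) : qf (A - B) x = qf A x - qf B x := by
  unfold qf; rw [sub_mulVec, dotProduct_sub]

lemma qf_conjTranspose (A : Matrix ι ι ℂ) (x : ι → ℂ) : qf Aᴴ x = star (qf A x) := by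
  unfold qf
  rw [star_dotProduct, star_mulVec, conjTranspose_conjTranspose, dotProduct_mulVec]

lemma qf_one (x : ι → ℂ) : qf 1 x = star x ⬝ᵥ x := by
  unfold qf; rw [one_mulVec]



lemma abs_sin_le {δ t : ℝ} (hδ : δ < Real.pi/2) (h : |t| ≤ δ) :
    |Real.sin t| ≤ Real.tan δ * Real.cos t := by
  have hpi := Real.pi_pos
  have hδ0 : 0 ≤ δ := (abs_nonneg t).trans h
  obtain ⟨h1, h2⟩ := abs_le.mp h
  have hct : 0 < Real.cos t := Real.cos_pos_of_mem_Ioo ⟨by linarith, by linarith⟩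
  have hcδ : 0 < Real.cos δ := Real.cos_pos_of_mem_Ioo ⟨by linarith, hδ⟩
  rw [Real.tan_eq_sin_div_cos, div_mul_eq_mul_div, le_div_iff₀ hcδ]
  have habs : |Real.sin t| = Real.sin |t| := by
    rcases abs_cases t with ⟨e1, e2⟩ | ⟨e1, e2⟩
    · rw [e1, _root_.abs_of_nonneg (Real.sin_nonneg_of_nonneg_of_le_pi e2 (by linarith))]
    · rw [e1, Real.sin_neg, _root_.abs_of_nonpos
        (Real.sin_nonpos_of_nonpos_of_neg_pi_le e2.le (by linarith))]
  have hsub : Real.sin (|t| - δ) ≤ 0 :=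
    Real.sin_nonpos_of_nonpos_of_neg_pi_le (by linarith) (by linarith [abs_nonneg t])
  rw [Real.sin_sub] at hsub
  have hcabs : Real.cos |t| = Real.cos t := Real.cos_abs t
  rw [habs, ← hcabs]
  nlinarith

lemma cos_le_cos_abs {δ t : ℝ} (hδ : δ ≤ Real.pi) (h : |t| ≤ δ) :
    Real.cos δ ≤ Real.cos t := by
  rw [← Real.cos_abs t]
  exact Real.cos_le_cos_of_nonneg_of_le_pi (abs_nonneg t) hδ h

/-- The key quantitative condition on a quadratic-form value. -/
def good (α β : ℝ) (z : ℂ) : Prop :=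
  0 < (Complex.exp ((-((α + β) / 2) : ℝ) * Complex.I) * z).re ∧
    |(Complex.exp ((-((α + β) / 2) : ℝ) * Complex.I) * z).im| ≤
      Real.tan ((β - α) / 2) * (Complex.exp ((-((α + β) / 2) : ℝ) * Complex.I) * z).re

lemma good.ne_zero {α β : ℝ} {z : ℂ} (h : good α β z) : z ≠ 0 := by
  rintro rfl
  simpa using h.1


lemma good_of_phasesIn {ι : Type*} [Fintype ι] [DecidableEq ι] {C : Matrix ι ι ℂ} {α β : ℝ}
    (hπ : β - α < Real.pi) (hC : PhasesIn C α β)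
    {x : ι → ℂ} (hx : x ≠ 0) : good α β (star x ⬝ᵥ C *ᵥ x) := by
  obtain ⟨T, D, hT, hD, hdec, hθall⟩ := hC
  choose θ hθ1 hθ2 hθ3 using hθall
  obtain ⟨i₀, -⟩ := Function.ne_iff.mp hx
  have hαβ : α ≤ β := (hθ1 i₀).trans (hθ2 i₀)
  unfold good
  set γ := (α + β) / 2 with hγ
  set δ := (β - α) / 2 with hδdef
  have hδ0 : 0 ≤ δ := by rw [hδdef]; linarith
  have hδπ : δ < Real.pi / 2 := by rw [hδdef]; linarith
  set y := T *ᵥ x with hy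
  have hy0 : y ≠ 0 := by
    intro h
    exact hx (Matrix.mulVec_injective_iff_isUnit.mpr hT
      (by rw [← hy, h, Matrix.mulVec_zero]))
  have hkey : star x ⬝ᵥ C *ᵥ x = star y ⬝ᵥ D *ᵥ y := by
    rw [hdec, hy]; exact (qf_mulVec D T x).symm
  have hDy : ∀ i, (D *ᵥ y) i = D i i * y i := by
    intro i
    rw [Matrix.mulVec, dotProduct]
    rw [Finset.sum_eq_single i (fun j _ hj => by rw [hD (Ne.symm hj), zero_mul])
      (fun h => absurd (Finset.mem_univ i) h)]
  set z := Complex.exp ((-γ : ℝ) * Complex.I) * (star y ⬝ᵥ D *ᵥ y) with hz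
  have hzsum : z = ∑ i, (Complex.normSq (y i) : ℂ) * Complex.exp ((θ i - γ : ℝ) * Complex.I) := by
    rw [hz, dotProduct, Finset.mul_sum]
    refine Finset.sum_congr rfl fun i _ => ?_
    rw [hDy i, hθ3 i]
    have e1 : Complex.exp (((-γ : ℝ) : ℂ) * Complex.I) * Complex.exp (((θ i : ℝ) : ℂ) * Complex.I)
        = Complex.exp (((θ i - γ : ℝ) : ℂ) * Complex.I) := by
      rw [← Complex.exp_add]; congr 1; push_cast; ring
    have e2 : (starRingEnd ℂ) (y i) * y i = ((Complex.normSq (y i) : ℝ) : ℂ) := by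
      rw [mul_comm, Complex.mul_conj]
    simp only [Pi.star_apply, Complex.star_def]
    rw [← e1, ← e2]; ring
  have hre : z.re = ∑ i, Complex.normSq (y i) * Real.cos (θ i - γ) := by
    rw [hzsum, Complex.re_sum]
    refine Finset.sum_congr rfl fun i _ => ?_
    rw [Complex.mul_re, Complex.exp_ofReal_mul_I_re, Complex.exp_ofReal_mul_I_im]
    simp
  have him : z.im = ∑ i, Complex.normSq (y i) * Real.sin (θ i - γ) := by
    rw [hzsum, Complex.im_sum]
    refine Finset.sum_congr rfl fun i _ => ?_
    rw [Complex.mul_im, Complex.exp_ofReal_mul_I_re, Complex.exp_ofReal_mul_I_im]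
    simp
  have habs : ∀ i, |θ i - γ| ≤ δ := fun i =>
    abs_le.mpr ⟨by have := hθ1 i; rw [hγ, hδdef] at *; linarith,
      by have := hθ2 i; rw [hγ, hδdef] at *; linarith⟩
  have hsum0 : 0 < ∑ i, Complex.normSq (y i) := by
    obtain ⟨i, hi⟩ := Function.ne_iff.mp hy0
    exact Finset.sum_pos' (fun j _ => Complex.normSq_nonneg _)
      ⟨i, Finset.mem_univ i, Complex.normSq_pos.mpr hi⟩
  have hrepos : 0 < z.re := by
    rw [hre]
    have hterm : ∀ i ∈ Finset.univ, Complex.normSq (y i) * Real.cos δ ≤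
        Complex.normSq (y i) * Real.cos (θ i - γ) := fun i _ =>
      mul_le_mul_of_nonneg_left (cos_le_cos_abs (by linarith [Real.pi_pos]) (habs i))
        (Complex.normSq_nonneg _)
    have h1 : 0 < Real.cos δ * ∑ i, Complex.normSq (y i) :=
      mul_pos (Real.cos_pos_of_mem_Ioo ⟨by linarith [Real.pi_pos], hδπ⟩) hsum0
    calc (0:ℝ) < Real.cos δ * ∑ i, Complex.normSq (y i) := h1
      _ = ∑ i, Complex.normSq (y i) * Real.cos δ := by
          rw [Finset.mul_sum]; exact Finset.sum_congr rfl fun i _ => mul_comm _ _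
      _ ≤ _ := Finset.sum_le_sum hterm
  have himle : |z.im| ≤ Real.tan δ * z.re := by
    rw [hre, him]
    calc |∑ i, Complex.normSq (y i) * Real.sin (θ i - γ)|
        ≤ ∑ i, |Complex.normSq (y i) * Real.sin (θ i - γ)| :=
          Finset.abs_sum_le_sum_abs _ _
      _ ≤ ∑ i, Complex.normSq (y i) * (Real.tan δ * Real.cos (θ i - γ)) := by
          refine Finset.sum_le_sum fun i _ => ?_
          rw [abs_mul, _root_.abs_of_nonneg (Complex.normSq_nonneg _)]
          exact mul_le_mul_of_nonneg_left (abs_sin_le hδπ (habs i)) (Complex.normSq_nonneg _)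
      _ = Real.tan δ * ∑ i, Complex.normSq (y i) * Real.cos (θ i - γ) := by
          rw [Finset.mul_sum]; exact Finset.sum_congr rfl fun i _ => by ring
  rw [hkey]
  exact ⟨hrepos, himle⟩

lemma memZ_of_good {ι : Type*} [Fintype ι] [DecidableEq ι] {S : Matrix ι ι ℂ} {α β : ℝ}
    (hπ : β - α < Real.pi) (hab : Nonempty ι → α ≤ β)
    (h : ∀ x : ι → ℂ, x ≠ 0 → good α β (star x ⬝ᵥ S *ᵥ x)) : MemZ S α β := by
  constructor
  · rintro ⟨x, hx1, hx2⟩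
    have hx0 : x ≠ 0 := by rintro rfl; simp at hx1
    exact (h x hx0).ne_zero hx2
  rcases isEmpty_or_nonempty ι with hempty | hne
  · exact ⟨1, 1, isUnit_one, Matrix.isDiag_one, Subsingleton.elim _ _, fun i => isEmptyElim i⟩
  have hαβ : α ≤ β := hab hne
  set γ := (α + β) / 2 with hγ
  set δ := (β - α) / 2 with hδdef
  have hδ0 : 0 ≤ δ := by rw [hδdef]; linarith
  have hδπ : δ < Real.pi / 2 := by rw [hδdef]; linarith
  set c : ℂ := Complex.exp ((-γ : ℝ) * Complex.I) with hc
  set A := c • S with hA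
  have hqa : ∀ x : ι → ℂ, x ≠ 0 →
      0 < (qf A x).re ∧ |(qf A x).im| ≤ Real.tan δ * (qf A x).re := by
    intro x hx
    have hg := h x hx
    unfold good at hg
    have he : qf A x = c * (star x ⬝ᵥ S *ᵥ x) := by rw [hA, qf_smul]; rfl
    rw [he]
    exact ⟨hg.1, hg.2⟩
  set H := (2 : ℂ)⁻¹ • (A + Aᴴ) with hH
  set K := (2 * Complex.I)⁻¹ • (A - Aᴴ) with hK
  have hHherm : H.IsHermitian := by
    unfold Matrix.IsHermitian
    rw [hH, conjTranspose_smul, conjTranspose_add, conjTranspose_conjTranspose]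
    rw [show (star ((2:ℂ)⁻¹)) = (2:ℂ)⁻¹ by simp, add_comm]
  have hKherm : K.IsHermitian := by
    unfold Matrix.IsHermitian
    rw [hK, conjTranspose_smul, conjTranspose_sub, conjTranspose_conjTranspose]
    rw [show (star (((2:ℂ) * Complex.I)⁻¹)) = -(((2:ℂ) * Complex.I)⁻¹) by
      simp [Complex.star_def, map_inv₀, Complex.conj_I, mul_neg, inv_neg]]
    rw [neg_smul, ← smul_neg, neg_sub]
  have hqH : ∀ x : ι → ℂ, qf H x = ((qf A x).re : ℂ) := by
    intro x
    rw [hH, qf_smul, qf_add, qf_conjTranspose, Complex.star_def, Complex.add_conj]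
    push_cast
    ring
  have hqK : ∀ x : ι → ℂ, qf K x = ((qf A x).im : ℂ) := by
    intro x
    rw [hK, qf_smul, qf_sub, qf_conjTranspose, Complex.star_def, Complex.sub_conj]
    rw [inv_mul_eq_div, div_eq_iff (by simp [Complex.I_ne_zero] : (2:ℂ) * Complex.I ≠ 0)]
    push_cast
    ring
  have hHpos : H.PosDef := by
    refine Matrix.PosDef.of_dotProduct_mulVec_pos hHherm fun x hx => ?_
    rw [show star x ⬝ᵥ H *ᵥ x = qf H x from rfl, hqH]
    exact Complex.zero_lt_real.mpr (hqa x hx).1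
  open scoped MatrixOrder in set R := CFC.sqrt H with hR
  open scoped MatrixOrder in have hRps : R.PosSemidef := (CFC.sqrt_nonneg H).posSemidef
  have hRherm : R.IsHermitian := hRps.1
  open scoped MatrixOrder in have hRR : R * R = H := CFC.sqrt_mul_sqrt_self H hHpos.posSemidef.nonneg
  have hdet : IsUnit R.det := by
    have h2 : IsUnit (R.det * R.det) := by
      rw [← Matrix.det_mul, hRR]
      exact (Matrix.isUnit_iff_isUnit_det H).mp hHpos.isUnit
    exact ((Commute.all _ _).isUnit_mul_iff.mp h2).1
  have hRunit : IsUnit R := (Matrix.isUnit_iff_isUnit_det R).mpr hdet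
  set M := R⁻¹ * K * R⁻¹ with hM
  have hRinv : R⁻¹ᴴ = R⁻¹ := hRherm.inv
  have hMherm : M.IsHermitian := by
    unfold Matrix.IsHermitian
    rw [hM, conjTranspose_mul, conjTranspose_mul, hRinv, hKherm.eq, Matrix.mul_assoc]
  have hA2 : A = R * ((1 + Complex.I • M) * R) := by
    have e1 : R * (M * R) = K := by
      have e2 : R * ((R⁻¹ * K * R⁻¹) * R) = (R * R⁻¹) * K * (R⁻¹ * R) := by
        noncomm_ring
      rw [hM, e2, Matrix.mul_nonsing_inv _ hdet, Matrix.nonsing_inv_mul _ hdet,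
        one_mul, mul_one]
    have e3 : A = H + Complex.I • K := by
      rw [hH, hK, smul_smul]
      have ei : Complex.I * ((2:ℂ) * Complex.I)⁻¹ = (2:ℂ)⁻¹ := by
        rw [mul_inv, Complex.inv_I]
        rw [show Complex.I * ((2:ℂ)⁻¹ * -Complex.I) = (2:ℂ)⁻¹ * (-(Complex.I * Complex.I)) by ring]
        rw [Complex.I_mul_I]
        ring
      rw [ei]
      module
    rw [e3, ← hRR, ← e1]
    rw [add_mul, one_mul, mul_add, smul_mul_assoc, mul_smul_comm]

  -- spectral theory of M
  set U := hMherm.eigenvectorUnitary with hU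
  set ev := hMherm.eigenvalues with hev0
  set Δ : Matrix ι ι ℂ := Matrix.diagonal (Complex.ofReal ∘ ev) with hΔ
  have hspec : M = (U : Matrix ι ι ℂ) * Δ * (star U : Matrix ι ι ℂ) := hMherm.spectral_theorem
  have hUU : (U : Matrix ι ι ℂ) * (star U : Matrix ι ι ℂ) = 1 :=
    Matrix.mem_unitaryGroup_iff.mp U.2
  have hUU' : (star U : Matrix ι ι ℂ) * (U : Matrix ι ι ℂ) = 1 :=
    Matrix.mem_unitaryGroup_iff'.mp U.2
  -- eigenvalue bounds
  have hevb : ∀ j, |ev j| ≤ Real.tan δ := by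
    intro j
    set v : ι → ℂ := ⇑(hMherm.eigenvectorBasis j) with hv
    have hvv : star v ⬝ᵥ v = 1 := by
      have h2 : (inner ℂ (hMherm.eigenvectorBasis j) (hMherm.eigenvectorBasis j) : ℂ) = 1 := by
        rw [inner_self_eq_norm_sq_to_K]
        rw [hMherm.eigenvectorBasis.orthonormal.1 j]
        norm_num
      rw [EuclideanSpace.inner_eq_star_dotProduct] at h2
      rw [dotProduct_comm]; exact h2
    have hv0 : v ≠ 0 := by intro hz; rw [hz] at hvv; simpa using hvv
    have hMv : M *ᵥ v = ev j • v := hMherm.mulVec_eigenvectorBasis j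
    set x := R⁻¹ *ᵥ v with hx
    have hx0 : x ≠ 0 := by
      intro hz
      apply hv0
      have hrv : R *ᵥ x = v := by
        rw [hx, Matrix.mulVec_mulVec, Matrix.mul_nonsing_inv _ hdet, Matrix.one_mulVec]
      rw [← hrv, hz, Matrix.mulVec_zero]
    have hqx : qf A x = 1 + ((ev j : ℝ) : ℂ) * Complex.I := by
      rw [hx, qf_mulVec, hRinv]
      have hred : R⁻¹ * A * R⁻¹ = 1 + Complex.I • M := by
        rw [hA2]
        calc R⁻¹ * (R * ((1 + Complex.I • M) * R)) * R⁻¹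
            = (R⁻¹ * R) * (1 + Complex.I • M) * (R * R⁻¹) := by noncomm_ring
          _ = 1 + Complex.I • M := by
              rw [Matrix.nonsing_inv_mul _ hdet, Matrix.mul_nonsing_inv _ hdet, one_mul, mul_one]
      rw [hred, qf_add, qf_one, hvv, qf_smul]
      rw [show qf M v = star v ⬝ᵥ M *ᵥ v from rfl, hMv, dotProduct_smul, hvv]
      rw [Complex.real_smul, mul_one]
      ring
    have hg := hqa x hx0
    rw [hqx] at hg
    simp only [Complex.add_re, Complex.add_im, Complex.one_re, Complex.one_im,
      Complex.mul_re, Complex.mul_im, Complex.I_re, Complex.I_im, Complex.ofReal_re,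
      Complex.ofReal_im, mul_zero, mul_one, zero_mul, sub_zero, add_zero, zero_add] at hg
    simpa using hg.2
  -- phases
  set φ : ι → ℝ := fun j => Real.arctan (ev j) with hφ
  have hφdef : ∀ j, φ j = Real.arctan (ev j) := fun j => by rw [hφ]
  have harc : ∀ j, |φ j| ≤ δ := by
    intro j
    have hb := hevb j
    obtain ⟨hb1, hb2⟩ := abs_le.mp hb
    have m := Real.arctan_strictMono.monotone
    have h1 : φ j ≤ δ := by
      rw [hφdef j]
      calc Real.arctan (ev j) ≤ Real.arctan (Real.tan δ) := m hb2
        _ = δ := Real.arctan_tan (by linarith [Real.pi_pos]) hδπ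
    have h2 : -δ ≤ φ j := by
      rw [hφdef j]
      calc -δ = Real.arctan (Real.tan (-δ)) :=
            (Real.arctan_tan (by linarith [Real.pi_pos]) (by linarith [Real.pi_pos])).symm
        _ = Real.arctan (-Real.tan δ) := by rw [Real.tan_neg]
        _ ≤ Real.arctan (ev j) := m hb1
    exact abs_le.mpr ⟨h2, h1⟩
  set r : ι → ℝ := fun j => Real.sqrt (1 + ev j ^ 2) with hr
  have hrpos : ∀ j, 0 < r j := fun j => Real.sqrt_pos.mpr (by nlinarith [sq_nonneg (ev j)])
  set sf : ι → ℝ := fun j => Real.sqrt (r j) with hsf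
  have hspos : ∀ j, 0 < sf j := fun j => Real.sqrt_pos.mpr (hrpos j)
  have hss : ∀ j, (sf j : ℂ) * (sf j : ℂ) = (r j : ℂ) := fun j => by
    rw [← Complex.ofReal_mul, hsf, Real.mul_self_sqrt (hrpos j).le]
  set θf : ι → ℝ := fun j => γ + φ j with hθf
  have hθfdef : ∀ j, θf j = γ + φ j := fun j => by rw [hθf]
  set E : Matrix ι ι ℂ := Matrix.diagonal (fun j => (sf j : ℂ)) with hE
  set Dm : Matrix ι ι ℂ := Matrix.diagonal (fun j => Complex.exp ((θf j : ℝ) * Complex.I)) with hDm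
  set T : Matrix ι ι ℂ := E * ((star U : Matrix ι ι ℂ) * R) with hT
  have hpt : ∀ j, (sf j : ℂ) * Complex.exp ((θf j : ℝ) * Complex.I) * (sf j : ℂ)
      = Complex.exp ((γ : ℝ) * Complex.I) * (1 + Complex.I * (ev j : ℝ)) := by
    intro j
    have hrne : Real.sqrt (1 + ev j ^ 2) ≠ 0 := by
      have := hrpos j; rw [hr] at this; exact this.ne'
    have h1 : r j * Real.cos (φ j) = 1 := by
      rw [hφdef j, Real.cos_arctan, hr]
      field_simp
    have h2 : r j * Real.sin (φ j) = ev j := by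
      rw [hφdef j, Real.sin_arctan, hr]
      field_simp
    have h3 : Complex.exp ((θf j : ℝ) * Complex.I)
        = Complex.exp ((γ : ℝ) * Complex.I) * Complex.exp ((φ j : ℝ) * Complex.I) := by
      rw [← Complex.exp_add]
      congr 1
      rw [hθfdef j]
      push_cast
      ring
    have h4 : (r j : ℂ) * Complex.exp ((φ j : ℝ) * Complex.I) = 1 + Complex.I * (ev j : ℝ) := by
      rw [Complex.exp_mul_I, ← Complex.ofReal_cos, ← Complex.ofReal_sin]
      calc (r j : ℂ) * ((Real.cos (φ j) : ℂ) + (Real.sin (φ j) : ℂ) * Complex.I)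
          = ((r j * Real.cos (φ j) : ℝ) : ℂ) + ((r j * Real.sin (φ j) : ℝ) : ℂ) * Complex.I := by
            push_cast; ring
        _ = 1 + Complex.I * (ev j : ℝ) := by rw [h1, h2]; push_cast; ring
    calc (sf j : ℂ) * Complex.exp ((θf j : ℝ) * Complex.I) * (sf j : ℂ)
        = ((sf j : ℂ) * (sf j : ℂ)) * Complex.exp ((θf j : ℝ) * Complex.I) := by ring
      _ = (r j : ℂ) * (Complex.exp ((γ : ℝ) * Complex.I) * Complex.exp ((φ j : ℝ) * Complex.I)) := by
          rw [hss j, h3]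
      _ = Complex.exp ((γ : ℝ) * Complex.I) * ((r j : ℂ) * Complex.exp ((φ j : ℝ) * Complex.I)) := by
          ring
      _ = _ := by rw [h4]
  have hdiag1 : (1 : Matrix ι ι ℂ) + Complex.I • Δ
      = Matrix.diagonal (fun j => 1 + Complex.I * (ev j : ℝ)) := by
    rw [hΔ, ← Matrix.diagonal_smul, ← Matrix.diagonal_one, ← Matrix.diagonal_add]
    congr 1
  have hEDE : E * Dm * E = Complex.exp ((γ : ℝ) * Complex.I) • ((1 : Matrix ι ι ℂ) + Complex.I • Δ) := by
    have harg : (fun j => (sf j : ℂ) * Complex.exp ((θf j : ℝ) * Complex.I) * (sf j : ℂ))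
        = Complex.exp ((γ : ℝ) * Complex.I) • (fun j => 1 + Complex.I * ((ev j : ℝ) : ℂ)) := by
      funext j
      simp only [Pi.smul_apply, smul_eq_mul]
      exact hpt j
    rw [hE, hDm, Matrix.diagonal_mul_diagonal, Matrix.diagonal_mul_diagonal, hdiag1,
      ← Matrix.diagonal_smul]
    exact congrArg Matrix.diagonal harg
  have hmid : (U : Matrix ι ι ℂ) * (((1 : Matrix ι ι ℂ) + Complex.I • Δ) * (star U : Matrix ι ι ℂ))
      = 1 + Complex.I • M := by
    rw [add_mul, one_mul, smul_mul_assoc, mul_add, mul_smul_comm, hUU, ← Matrix.mul_assoc, ← hspec]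
  have hTH : Tᴴ = (R * (U : Matrix ι ι ℂ)) * E := by
    rw [hT, conjTranspose_mul, conjTranspose_mul, hRherm.eq]
    rw [show ((star U : Matrix ι ι ℂ))ᴴ = (U : Matrix ι ι ℂ) by
      rw [← Matrix.star_eq_conjTranspose, star_star]]
    rw [show Eᴴ = E by
      rw [hE, Matrix.diagonal_conjTranspose]
      exact congrArg Matrix.diagonal (by funext j; simp [Complex.conj_ofReal])]
  have hfin : S = Tᴴ * Dm * T := by
    rw [hTH, hT]
    have hassoc : ((R * (U : Matrix ι ι ℂ)) * E) * Dm * (E * ((star U : Matrix ι ι ℂ) * R))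
        = (R * (U : Matrix ι ι ℂ)) * ((E * Dm * E) * ((star U : Matrix ι ι ℂ) * R)) := by
      noncomm_ring
    rw [hassoc, hEDE, smul_mul_assoc, mul_smul_comm]
    have h5 : (R * (U : Matrix ι ι ℂ)) *
        (((1 : Matrix ι ι ℂ) + Complex.I • Δ) * ((star U : Matrix ι ι ℂ) * R)) = A := by
      calc (R * (U : Matrix ι ι ℂ)) *
          (((1 : Matrix ι ι ℂ) + Complex.I • Δ) * ((star U : Matrix ι ι ℂ) * R))
          = R * (((U : Matrix ι ι ℂ) *
            (((1 : Matrix ι ι ℂ) + Complex.I • Δ) * (star U : Matrix ι ι ℂ))) * R) := by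
            noncomm_ring
        _ = R * ((1 + Complex.I • M) * R) := by rw [hmid]
        _ = A := hA2.symm
    rw [h5, hA, smul_smul]
    rw [show Complex.exp ((γ : ℝ) * Complex.I) * c = 1 by
      rw [hc, ← Complex.exp_add,
        show ((γ : ℝ) : ℂ) * Complex.I + ((-γ : ℝ) : ℂ) * Complex.I = 0 by push_cast; ring]
      exact Complex.exp_zero]
    rw [one_smul]
  have hEunit : IsUnit E := by
    rw [hE, Matrix.isUnit_iff_isUnit_det, Matrix.det_diagonal, isUnit_iff_ne_zero]
    exact Finset.prod_ne_zero_iff.mpr fun j _ => Complex.ofReal_ne_zero.mpr (hspos j).ne'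
  have hUsunit : IsUnit (star U : Matrix ι ι ℂ) := ⟨⟨(star U : Matrix ι ι ℂ), (U : Matrix ι ι ℂ), hUU', hUU⟩, rfl⟩
  have hTunit : IsUnit T := by rw [hT]; exact hEunit.mul (hUsunit.mul hRunit)
  refine ⟨T, Dm, hTunit, by rw [hDm]; exact Matrix.isDiag_diagonal _, hfin, fun i => ?_⟩
  refine ⟨θf i, ?_, ?_, by rw [hDm, Matrix.diagonal_apply_eq]⟩
  · have h6 := (abs_le.mp (harc i)).1
    rw [hθfdef i, hγ]
    rw [hδdef] at h6
    linarith
  · have h6 := (abs_le.mp (harc i)).2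
    rw [hθfdef i, hγ]
    rw [hδdef] at h6
    linarith

end SchurAux

theorem schur_complement_of_sectorial {l m : Type*} [Fintype l] [Fintype m]
    [DecidableEq l] [DecidableEq m]
    (Z : Matrix (l ⊕ m) (l ⊕ m) ℂ) (α β : ℝ)
    (hαβ : β - α < Real.pi) (hZ : MemZ Z α β) :
    IsUnit Z.toBlocks₂₂ ∧
      MemZ (Z.toBlocks₁₁ - Z.toBlocks₁₂ * Z.toBlocks₂₂⁻¹ * Z.toBlocks₂₁) α β := by
  obtain ⟨hsec, hph⟩ := hZ
  have hgoodZ : ∀ v : (l ⊕ m) → ℂ, v ≠ 0 → SchurAux.good α β (star v ⬝ᵥ Z *ᵥ v) :=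
    fun v hv => SchurAux.good_of_phasesIn hαβ hph hv
  have hblock : Z = Matrix.fromBlocks Z.toBlocks₁₁ Z.toBlocks₁₂ Z.toBlocks₂₁ Z.toBlocks₂₂ :=
    (Matrix.fromBlocks_toBlocks Z).symm
  have hstar : ∀ (a : l → ℂ) (b : m → ℂ), star (Sum.elim a b) = Sum.elim (star a) (star b) := by
    intro a b; funext i; cases i <;> rfl
  have hg22 : ∀ x : m → ℂ, x ≠ 0 → SchurAux.good α β (star x ⬝ᵥ Z.toBlocks₂₂ *ᵥ x) := by
    intro x hx
    have hv : (Sum.elim (0 : l → ℂ) x) ≠ 0 := by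
      intro hz; apply hx; funext i; exact congrFun hz (Sum.inr i)
    have he : star (Sum.elim (0 : l → ℂ) x) ⬝ᵥ Z *ᵥ (Sum.elim (0 : l → ℂ) x)
        = star x ⬝ᵥ Z.toBlocks₂₂ *ᵥ x := by
      conv_lhs => rw [hblock]
      rw [Matrix.fromBlocks_mulVec, hstar, sumElim_dotProduct_sumElim]
      simp [Matrix.mulVec_zero]
    rw [← he]; exact hgoodZ _ hv
  have hUnit22 : IsUnit Z.toBlocks₂₂ := by
    rw [← Matrix.mulVec_injective_iff_isUnit]
    intro a b hab
    by_contra hne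
    have hx : a - b ≠ 0 := sub_ne_zero.mpr hne
    have h0 : Z.toBlocks₂₂ *ᵥ (a - b) = 0 := by
      rw [Matrix.mulVec_sub, hab, sub_self]
    exact (hg22 _ hx).ne_zero (by rw [h0, dotProduct_zero])
  have hdet22 : IsUnit Z.toBlocks₂₂.det := (Matrix.isUnit_iff_isUnit_det _).mp hUnit22
  refine ⟨hUnit22, ?_⟩
  have hgS : ∀ x : l → ℂ, x ≠ 0 → SchurAux.good α β
      (star x ⬝ᵥ (Z.toBlocks₁₁ - Z.toBlocks₁₂ * Z.toBlocks₂₂⁻¹ * Z.toBlocks₂₁) *ᵥ x) := by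
    intro x hx
    set y : m → ℂ := -((Z.toBlocks₂₂⁻¹ * Z.toBlocks₂₁) *ᵥ x) with hy
    have hv : Sum.elim x y ≠ 0 := fun hz => hx (funext fun i => congrFun hz (Sum.inl i))
    have hZv : Z *ᵥ Sum.elim x y =
        Sum.elim ((Z.toBlocks₁₁ - Z.toBlocks₁₂ * Z.toBlocks₂₂⁻¹ * Z.toBlocks₂₁) *ᵥ x) 0 := by
      conv_lhs => rw [hblock]
      rw [Matrix.fromBlocks_mulVec, Sum.elim_comp_inl, Sum.elim_comp_inr, hy,
        Matrix.mulVec_neg, Matrix.mulVec_neg, Matrix.mulVec_mulVec, Matrix.mulVec_mulVec]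
      refine congrArg₂ Sum.elim ?_ ?_
      · rw [Matrix.sub_mulVec, Matrix.mul_assoc, sub_eq_add_neg]
      · rw [← Matrix.mul_assoc, Matrix.mul_nonsing_inv _ hdet22, Matrix.one_mul]
        exact add_neg_cancel _
    have he : star (Sum.elim x y) ⬝ᵥ Z *ᵥ Sum.elim x y
        = star x ⬝ᵥ (Z.toBlocks₁₁ - Z.toBlocks₁₂ * Z.toBlocks₂₂⁻¹ * Z.toBlocks₂₁) *ᵥ x := by
      rw [hZv, hstar, sumElim_dotProduct_sumElim, dotProduct_zero, add_zero]
    rw [← he]; exact hgoodZ _ hv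
  refine SchurAux.memZ_of_good hαβ (fun hne => ?_) hgS
  obtain ⟨i⟩ := hne
  obtain ⟨Tz, Dz, -, -, -, hph'⟩ := hph
  obtain ⟨θ, h1, h2, -⟩ := hph' (Sum.inl i)
  exact h1.trans h2
end
end

section
/- If Z^a and Z^b are n×n sectorial matrices with phases in [α, β] where β − α < π, then the series-connected impedance Z^c = Z^a + Z^b is sectorial with phases in [α, β]. -/
open Matrix Complex

noncomputable section

set_option linter.unusedSectionVars false
set_option linter.unusedVariables false
open scoped ComplexOrder
open scoped MatrixOrder

lemma exp_I_mul_exp_I (a b : ℝ) :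
    Complex.exp ((a:ℂ)*Complex.I) * Complex.exp ((b:ℂ)*Complex.I)
      = Complex.exp (((a+b : ℝ):ℂ)*Complex.I) := by
  rw [← Complex.exp_add]; push_cast; ring_nf

lemma re_exp_mul (t : ℝ) (z : ℂ) (r θ : ℝ) (hz : z = (r:ℂ) * Complex.exp ((θ:ℂ)*Complex.I)) :
    (Complex.exp ((t:ℂ)*Complex.I) * z).re = r * Real.cos (t + θ) := by
  subst hz
  calc (Complex.exp ((t:ℂ)*Complex.I) * ((r:ℂ) * Complex.exp ((θ:ℂ)*Complex.I))).re
      = ((r:ℂ) * (Complex.exp ((t:ℂ)*Complex.I) * Complex.exp ((θ:ℂ)*Complex.I))).re := by ring_nf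
    _ = ((r:ℂ) * Complex.exp (((t+θ:ℝ):ℂ)*Complex.I)).re := by rw [exp_I_mul_exp_I]
    _ = r * Real.cos (t+θ) := by rw [Complex.re_ofReal_mul, Complex.exp_ofReal_mul_I_re]

lemma im_exp_mul (t : ℝ) (z : ℂ) (r θ : ℝ) (hz : z = (r:ℂ) * Complex.exp ((θ:ℂ)*Complex.I)) :
    (Complex.exp ((t:ℂ)*Complex.I) * z).im = r * Real.sin (t + θ) := by
  subst hz
  calc (Complex.exp ((t:ℂ)*Complex.I) * ((r:ℂ) * Complex.exp ((θ:ℂ)*Complex.I))).im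
      = ((r:ℂ) * (Complex.exp ((t:ℂ)*Complex.I) * Complex.exp ((θ:ℂ)*Complex.I))).im := by ring_nf
    _ = ((r:ℂ) * Complex.exp (((t+θ:ℝ):ℂ)*Complex.I)).im := by rw [exp_I_mul_exp_I]
    _ = r * Real.sin (t+θ) := by rw [Complex.im_ofReal_mul, Complex.exp_ofReal_mul_I_im]

/-- characterization of the sector by three half-planes, when `α ≤ β < α + π`. -/
lemma sector_mem_iff {α β : ℝ} (hle : α ≤ β) (hlt : β - α < Real.pi) (z : ℂ) :
    z ∈ sector α β ↔
      0 ≤ (Complex.exp ((-α:ℝ) * Complex.I) * z).im ∧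
      (Complex.exp ((-β:ℝ) * Complex.I) * z).im ≤ 0 ∧
      0 ≤ (Complex.exp ((-((α+β)/2):ℝ) * Complex.I) * z).re := by
  constructor
  · rintro ⟨r, θ, hr, hθ1, hθ2, rfl⟩
    refine ⟨?_, ?_, ?_⟩
    · rw [im_exp_mul _ _ r θ rfl]
      exact mul_nonneg hr (Real.sin_nonneg_of_nonneg_of_le_pi (by linarith) (by linarith))
    · rw [im_exp_mul _ _ r θ rfl]
      have : Real.sin (-β + θ) ≤ 0 := by
        rw [show -β + θ = -(β - θ) by ring, Real.sin_neg, neg_nonpos]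
        exact Real.sin_nonneg_of_nonneg_of_le_pi (by linarith) (by linarith)
      exact mul_nonpos_of_nonneg_of_nonpos hr this
    · rw [re_exp_mul _ _ r θ rfl]
      refine mul_nonneg hr (le_of_lt (Real.cos_pos_of_mem_Ioo ⟨by linarith, by linarith⟩))
  · rintro ⟨h1, h2, h3⟩
    rcases eq_or_ne z 0 with rfl | hz
    · exact ⟨0, α, le_refl _, le_refl _, hle, by simp⟩
    · set w : ℂ := Complex.exp ((-α:ℝ) * Complex.I) * z with hw
      have hwne : w ≠ 0 := mul_ne_zero (Complex.exp_ne_zero _) hz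
      have hrep : z = ((‖w‖ : ℝ):ℂ) * Complex.exp (((α + w.arg : ℝ):ℂ) * Complex.I) := by
        have habs := Complex.norm_mul_exp_arg_mul_I w
        have hz' : z = Complex.exp ((α:ℝ) * Complex.I) * w := by
          rw [hw, ← mul_assoc, exp_I_mul_exp_I]
          simp
        calc z = Complex.exp ((α:ℝ) * Complex.I) * (↑‖w‖ * Complex.exp ((w.arg:ℝ) * Complex.I)) := by
                rw [habs]; exact hz'
          _ = ((‖w‖ : ℝ):ℂ) * (Complex.exp ((α:ℝ) * Complex.I) * Complex.exp ((w.arg:ℝ) * Complex.I)) := by ring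
          _ = ((‖w‖ : ℝ):ℂ) * Complex.exp (((α + w.arg : ℝ):ℂ) * Complex.I) := by rw [exp_I_mul_exp_I]
      have habs : 0 < ‖w‖ := norm_pos_iff.mpr hwne
      have harg0 : 0 ≤ w.arg := Complex.arg_nonneg_iff.2 h1
      have hargpi : w.arg ≤ Real.pi := Complex.arg_le_pi w
      have hargβ : w.arg ≤ β - α := by
        by_contra hgt
        push_neg at hgt
        rcases lt_or_eq_of_le hargpi with hpi | hpi
        · have : (Complex.exp ((-β:ℝ) * Complex.I) * z).im
              = ‖w‖ * Real.sin (-β + (α + w.arg)) := im_exp_mul _ _ _ _ hrep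
          have hpos : 0 < Real.sin (-β + (α + w.arg)) :=
            Real.sin_pos_of_pos_of_lt_pi (by linarith) (by linarith)
          nlinarith [mul_pos habs hpos]
        · have : (Complex.exp ((-((α+β)/2):ℝ) * Complex.I) * z).re
              = ‖w‖ * Real.cos (-((α+β)/2) + (α + w.arg)) := re_exp_mul _ _ _ _ hrep
          have hneg : Real.cos (-((α+β)/2) + (α + w.arg)) < 0 := by
            rw [hpi]
            apply Real.cos_neg_of_pi_div_two_lt_of_lt <;> [linarith; linarith [Real.pi_pos]]
          nlinarith [mul_pos habs (neg_pos.2 hneg)]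
      exact ⟨‖w‖, α + w.arg, le_of_lt habs, by linarith, by linarith, hrep⟩

lemma sector_add {α β : ℝ} (hle : α ≤ β) (hlt : β - α < Real.pi) {z₁ z₂ : ℂ}
    (h1 : z₁ ∈ sector α β) (h2 : z₂ ∈ sector α β) : z₁ + z₂ ∈ sector α β := by
  rw [sector_mem_iff hle hlt] at *
  obtain ⟨a1, b1, c1⟩ := h1
  obtain ⟨a2, b2, c2⟩ := h2
  refine ⟨?_, ?_, ?_⟩ <;> simp only [mul_add, Complex.add_im, Complex.add_re] <;> linarith


lemma zero_mem_sector {α β : ℝ} (hle : α ≤ β) : (0:ℂ) ∈ sector α β :=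
  ⟨0, α, le_refl _, le_refl _, hle, by simp⟩

lemma quad_congr {ι : Type*} [Fintype ι] (T D : Matrix ι ι ℂ) (x : ι → ℂ) :
    star x ⬝ᵥ (Tᴴ * D * T) *ᵥ x = star (T *ᵥ x) ⬝ᵥ D *ᵥ (T *ᵥ x) := by
  rw [star_mulVec, ← dotProduct_mulVec, mulVec_mulVec, mulVec_mulVec]

lemma quad_diag {ι : Type*} [Fintype ι] [DecidableEq ι] (D : Matrix ι ι ℂ) (hD : D.IsDiag)
    (y : ι → ℂ) :
    star y ⬝ᵥ D *ᵥ y = ∑ i, ((Complex.normSq (y i) : ℝ) : ℂ) * D i i := by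
  unfold dotProduct
  refine Finset.sum_congr rfl fun i _ => ?_
  have hmv : (D *ᵥ y) i = D i i * y i := by
    unfold mulVec dotProduct
    exact Finset.sum_eq_single i (fun j _ hj => by simp only []; rw [hD (Ne.symm hj), zero_mul])
      (fun h => absurd (Finset.mem_univ i) h)
  rw [hmv]
  have : (starRingEnd ℂ) (y i) * y i = ((Complex.normSq (y i) : ℝ) : ℂ) := by
    rw [mul_comm, Complex.mul_conj]
  calc star y i * (D i i * y i) = ((starRingEnd ℂ) (y i) * y i) * D i i := by
        simp [Pi.star_apply, Complex.star_def]; ring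
    _ = _ := by rw [this]

lemma mulVec_ne_zero {ι : Type*} [Fintype ι] [DecidableEq ι] {T : Matrix ι ι ℂ}
    (hT : IsUnit T) {x : ι → ℂ} (hx : x ≠ 0) : T *ᵥ x ≠ 0 := by
  intro h0
  apply hx
  rw [Matrix.isUnit_iff_isUnit_det] at hT
  calc x = (T⁻¹ * T) *ᵥ x := by rw [Matrix.nonsing_inv_mul T hT, one_mulVec]
    _ = T⁻¹ *ᵥ (T *ᵥ x) := by rw [mulVec_mulVec]
    _ = 0 := by rw [h0, mulVec_zero]

lemma phases_quad {ι : Type*} [Fintype ι] [DecidableEq ι] {C : Matrix ι ι ℂ} {α β : ℝ}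
    (hle : α ≤ β) (hlt : β - α < Real.pi) (h : PhasesIn C α β) (x : ι → ℂ) (hx : x ≠ 0) :
    star x ⬝ᵥ C *ᵥ x ∈ sector α β ∧
      0 < (Complex.exp ((-((α+β)/2):ℝ) * Complex.I) * (star x ⬝ᵥ C *ᵥ x)).re := by
  obtain ⟨T, D, hT, hD, hC, hθ⟩ := h
  choose θf hθ1 hθ2 hθ3 using hθ
  have hy : T *ᵥ x ≠ 0 := mulVec_ne_zero hT hx
  rw [hC, quad_congr, quad_diag D hD]
  set y := T *ᵥ x with hydef
  constructor
  · refine Finset.sum_induction _ (· ∈ sector α β) (fun a b => sector_add hle hlt)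
      (zero_mem_sector hle) (fun i _ => ?_)
    exact ⟨Complex.normSq (y i), θf i, Complex.normSq_nonneg _, hθ1 i, hθ2 i, by rw [hθ3 i]⟩
  · rw [Finset.mul_sum, Complex.re_sum]
    have hterm : ∀ i, (Complex.exp ((-((α+β)/2):ℝ) * Complex.I)
        * (((Complex.normSq (y i) : ℝ):ℂ) * D i i)).re
        = Complex.normSq (y i) * Real.cos (-((α+β)/2) + θf i) := fun i =>
      re_exp_mul _ _ _ _ (by rw [hθ3 i])
    have hcos : ∀ i, 0 < Real.cos (-((α+β)/2) + θf i) := fun i =>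
      Real.cos_pos_of_mem_Ioo ⟨by have := hθ1 i; have := hθ2 i; linarith,
        by have := hθ1 i; have := hθ2 i; linarith⟩
    obtain ⟨i0, hi0⟩ : ∃ i, y i ≠ 0 := Function.ne_iff.mp hy
    refine Finset.sum_pos' (fun i _ => ?_) ⟨i0, Finset.mem_univ i0, ?_⟩
    · rw [hterm i]; exact mul_nonneg (Complex.normSq_nonneg _) (le_of_lt (hcos i))
    · rw [hterm i0]
      exact mul_pos (Complex.normSq_pos.2 hi0) (hcos i0)

section Backward
variable {ι : Type*} [Fintype ι] [DecidableEq ι]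

lemma quad_smul (c : ℂ) (C : Matrix ι ι ℂ) (x : ι → ℂ) :
    star x ⬝ᵥ (c • C) *ᵥ x = c * (star x ⬝ᵥ C *ᵥ x) := by
  rw [smul_mulVec, dotProduct_smul, smul_eq_mul]

lemma quad_conjTranspose (A : Matrix ι ι ℂ) (x : ι → ℂ) :
    star x ⬝ᵥ Aᴴ *ᵥ x = star (star x ⬝ᵥ A *ᵥ x) := by
  simp only [dotProduct, mulVec, conjTranspose_apply, star_sum, star_mul', star_star,
    Finset.mul_sum]
  rw [Finset.sum_comm]
  exact Finset.sum_congr rfl fun i _ => Finset.sum_congr rfl fun j _ => by simp only [Pi.star_apply, star_star]; ring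

lemma dotProduct_self_real (v : ι → ℂ) :
    star v ⬝ᵥ v = ((∑ i, Complex.normSq (v i) : ℝ) : ℂ) := by
  unfold dotProduct
  push_cast
  refine Finset.sum_congr rfl fun i _ => ?_
  simp [Complex.star_def, ← Complex.normSq_eq_conj_mul_self]

lemma quad_phasesIn {C : Matrix ι ι ℂ} {α β : ℝ}
    (hle : α ≤ β) (hlt : β - α < Real.pi)
    (h : ∀ x : ι → ℂ, x ≠ 0 → star x ⬝ᵥ C *ᵥ x ∈ sector α β ∧
      0 < (Complex.exp ((-((α+β)/2):ℝ) * Complex.I) * (star x ⬝ᵥ C *ᵥ x)).re) :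
    PhasesIn C α β := by
  set γ : ℝ := (α+β)/2 with hγ
  set C' : Matrix ι ι ℂ := Complex.exp ((-γ:ℝ) * Complex.I) • C with hC'
  set H : Matrix ι ι ℂ := (1/2 : ℂ) • (C' + C'ᴴ) with hH
  have hherm : H.IsHermitian := by
    rw [Matrix.IsHermitian, hH, conjTranspose_smul, conjTranspose_add, conjTranspose_conjTranspose]
    rw [show star (1/2 : ℂ) = (1/2 : ℂ) by simp, add_comm]
  -- quadratic form of H is the real part of that of C'
  have hquadH : ∀ x : ι → ℂ, star x ⬝ᵥ H *ᵥ x = (((star x ⬝ᵥ C' *ᵥ x).re : ℝ) : ℂ) := by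
    intro x
    rw [hH, quad_smul, add_mulVec, dotProduct_add, quad_conjTranspose]
    rw [Complex.star_def, Complex.add_conj]
    push_cast
    ring
  have hHpd : H.PosDef := by
    refine posDef_iff_dotProduct_mulVec.2 ⟨hherm, fun x hx => ?_⟩
    rw [hquadH x]
    have : star x ⬝ᵥ C' *ᵥ x = Complex.exp ((-γ:ℝ) * Complex.I) * (star x ⬝ᵥ C *ᵥ x) := by
      rw [hC', quad_smul]
    rw [this]
    exact_mod_cast Complex.zero_lt_real.2 ((h x hx).2)
  have hdetH : H.det ≠ 0 := hHpd.det_pos.ne'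
  set P : Matrix ι ι ℂ := CFC.sqrt H with hP
  have hPherm : P.IsHermitian := (Matrix.nonneg_iff_posSemidef.mp (CFC.sqrt_nonneg H)).1
  have hPP : P * P = H := CFC.sqrt_mul_sqrt_self H (Matrix.nonneg_iff_posSemidef.mpr hHpd.posSemidef)
  have hPdet : IsUnit P.det := by
    rw [isUnit_iff_ne_zero]
    intro h0
    apply hdetH
    rw [← hPP, det_mul, h0, mul_zero]
  have hPinv : P * P⁻¹ = 1 := mul_nonsing_inv P hPdet
  have hinvP : P⁻¹ * P = 1 := nonsing_inv_mul P hPdet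
  have hPinvherm : (P⁻¹)ᴴ = P⁻¹ := by rw [conjTranspose_nonsing_inv, hPherm.eq]
  set B : Matrix ι ι ℂ := P⁻¹ * C' * P⁻¹ with hB
  have hC'B : C' = P * B * P := by
    rw [hB]
    calc C' = (P * P⁻¹) * C' * (P⁻¹ * P) := by rw [hPinv, hinvP, one_mul, mul_one]
      _ = P * (P⁻¹ * C' * P⁻¹) * P := by simp only [mul_assoc]
  have hBsum : B + Bᴴ = (2:ℂ) • (1 : Matrix ι ι ℂ) := by
    have hBH : Bᴴ = P⁻¹ * C'ᴴ * P⁻¹ := by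
      rw [hB, conjTranspose_mul, conjTranspose_mul, hPinvherm, mul_assoc]
    have h2H : C' + C'ᴴ = (2:ℂ) • H := by rw [hH, smul_smul]; norm_num
    calc B + Bᴴ = P⁻¹ * (C' + C'ᴴ) * P⁻¹ := by rw [hBH, mul_add, add_mul]
      _ = (2:ℂ) • (P⁻¹ * H * P⁻¹) := by rw [h2H, Matrix.mul_smul, Matrix.smul_mul]
      _ = (2:ℂ) • (1 : Matrix ι ι ℂ) := by
          rw [← hPP, show P⁻¹ * (P * P) * P⁻¹ = (P⁻¹ * P) * (P * P⁻¹) by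
            simp only [mul_assoc], hinvP, hPinv, one_mul]
  set S : Matrix ι ι ℂ := (-(Complex.I/2)) • (B - Bᴴ) with hS
  have hSherm : S.IsHermitian := by
    rw [Matrix.IsHermitian, hS, conjTranspose_smul, conjTranspose_sub, conjTranspose_conjTranspose]
    rw [show star (-(Complex.I/2)) = Complex.I/2 by simp only [star_neg, star_div₀, Complex.star_def, Complex.conj_I, map_ofNat]; ring]
    module
  have hBS : B = 1 + Complex.I • S := by
    have h1 : Complex.I • S = (1/2 : ℂ) • (B - Bᴴ) := by
      rw [hS, smul_smul,
        show Complex.I * -(Complex.I/2) = (1/2:ℂ) by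
          linear_combination (-(1:ℂ)/2) * Complex.I_mul_I]
    have h2 : (1 : Matrix ι ι ℂ) = (1/2 : ℂ) • (B + Bᴴ) := by rw [hBsum, smul_smul]; norm_num
    rw [h1, h2]
    module
  -- spectral theorem for S
  set V : Matrix ι ι ℂ := (hSherm.eigenvectorUnitary : Matrix ι ι ℂ) with hV
  set lam : ι → ℝ := hSherm.eigenvalues with hlam
  have hVV : V * Vᴴ = 1 := by
    rw [← star_eq_conjTranspose]
    exact Matrix.mem_unitaryGroup_iff.mp (hSherm.eigenvectorUnitary).2
  have hVV' : Vᴴ * V = 1 := by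
    rw [← star_eq_conjTranspose]
    exact Matrix.mem_unitaryGroup_iff'.mp (hSherm.eigenvectorUnitary).2
  have hspec : S = V * diagonal (fun k => ((lam k : ℝ) : ℂ)) * Vᴴ := by
    rw [← star_eq_conjTranspose]
    exact hSherm.spectral_theorem
  have hBspec : B = V * diagonal (fun k => 1 + ((lam k : ℝ):ℂ) * Complex.I) * Vᴴ := by
    have hd : diagonal (fun k => 1 + ((lam k : ℝ):ℂ) * Complex.I)
        = 1 + Complex.I • diagonal (fun k => ((lam k : ℝ):ℂ)) := by
      ext i j
      rcases eq_or_ne i j with rfl | hij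
      · simp [Matrix.smul_apply]; ring
      · simp [Matrix.diagonal_apply_ne _ hij, Matrix.one_apply_ne hij, Matrix.smul_apply]
    have hcalc : V * (1 + Complex.I • diagonal (fun k => ((lam k : ℝ):ℂ))) * Vᴴ
        = 1 + Complex.I • S := by
      calc V * (1 + Complex.I • diagonal (fun k => ((lam k : ℝ):ℂ))) * Vᴴ
          = V*Vᴴ + Complex.I • (V * diagonal (fun k => ((lam k : ℝ):ℂ)) * Vᴴ) := by
            rw [mul_add, add_mul, mul_one, Matrix.mul_smul, Matrix.smul_mul]
        _ = 1 + Complex.I • S := by rw [hVV, ← hspec]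
    rw [hBS, ← hcalc, hd]
  -- per-eigenvalue phase bound
  have key : ∀ k : ι, ∃ ρ θ : ℝ, 0 < ρ ∧ α ≤ θ ∧ θ ≤ β ∧
      (1 + ((lam k : ℝ):ℂ) * Complex.I) * Complex.exp ((γ:ℝ) * Complex.I)
        = ((ρ:ℝ):ℂ) * Complex.exp ((θ:ℝ) * Complex.I) := by
    intro k
    set v : ι → ℂ := (WithLp.equiv 2 (ι → ℂ)) (hSherm.eigenvectorBasis k) with hv
    have hSv : S *ᵥ v = lam k • v := hSherm.mulVec_eigenvectorBasis k
    have hvne : v ≠ 0 := by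
      intro h0
      apply hSherm.eigenvectorBasis.orthonormal.ne_zero k
      apply (WithLp.equiv 2 (ι → ℂ)).injective
      rw [hv] at h0
      rw [h0]
      simp
    set x : ι → ℂ := P⁻¹ *ᵥ v with hx
    have hPx : P *ᵥ x = v := by rw [hx, mulVec_mulVec, hPinv, one_mulVec]
    have hxne : x ≠ 0 := fun h0 => hvne (by rw [← hPx, h0, mulVec_zero])
    have hstarx : star x ᵥ* P = star v := by
      have hsm : star (P *ᵥ x) = star x ᵥ* Pᴴ := star_mulVec P x
      rw [hPx, hPherm.eq] at hsm
      exact hsm.symm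
    have hquad : star x ⬝ᵥ C' *ᵥ x = (star v ⬝ᵥ v) * (1 + ((lam k : ℝ):ℂ) * Complex.I) := by
      rw [hC'B, ← mulVec_mulVec, ← mulVec_mulVec, hPx, dotProduct_mulVec, hstarx]
      rw [hBS, add_mulVec, one_mulVec, smul_mulVec, hSv]
      rw [dotProduct_add, dotProduct_smul, dotProduct_smul]
      simp only [smul_eq_mul, Complex.real_smul]
      ring
    have hc := dotProduct_self_real v
    set creal := ∑ i, Complex.normSq (v i) with hcreal
    have hcpos : 0 < creal := by
      refine Finset.sum_pos' (fun i _ => Complex.normSq_nonneg _) ?_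
      obtain ⟨i, hi⟩ := Function.ne_iff.mp hvne
      exact ⟨i, Finset.mem_univ i, Complex.normSq_pos.2 hi⟩
    obtain ⟨hsec, hre⟩ := h x hxne
    obtain ⟨r, θ, hr, hθ1, hθ2, hz⟩ := hsec
    have hrpos : 0 < r := by
      rcases lt_or_eq_of_le hr with h' | h'
      · exact h'
      · exfalso
        rw [hz, ← h'] at hre
        simp at hre
    have heq : ((creal:ℝ):ℂ) * (1 + ((lam k : ℝ):ℂ) * Complex.I)
        = ((r:ℝ):ℂ) * Complex.exp (((-γ+θ:ℝ):ℂ) * Complex.I) := by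
      have e1 : star x ⬝ᵥ C' *ᵥ x
          = Complex.exp ((-γ:ℝ) * Complex.I) * (star x ⬝ᵥ C *ᵥ x) := by
        rw [hC', quad_smul]
      rw [hquad, hc, hz] at e1
      rw [e1, show Complex.exp ((-γ:ℝ) * Complex.I) * (((r:ℝ):ℂ) * Complex.exp ((θ:ℝ) * Complex.I))
          = ((r:ℝ):ℂ) * (Complex.exp ((-γ:ℝ) * Complex.I) * Complex.exp ((θ:ℝ) * Complex.I)) by ring,
        exp_I_mul_exp_I]
    have hcne : ((creal:ℝ):ℂ) ≠ 0 := by exact_mod_cast hcpos.ne'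
    refine ⟨r / creal, θ, div_pos hrpos hcpos, hθ1, hθ2, ?_⟩
    have hmul : Complex.exp (((-γ+θ:ℝ):ℂ) * Complex.I) * Complex.exp ((γ:ℝ) * Complex.I)
        = Complex.exp ((θ:ℝ) * Complex.I) := by
      rw [exp_I_mul_exp_I]
      norm_num
    apply mul_left_cancel₀ hcne
    calc ((creal:ℝ):ℂ) * ((1 + ((lam k : ℝ):ℂ) * Complex.I) * Complex.exp ((γ:ℝ) * Complex.I))
        = (((creal:ℝ):ℂ) * (1 + ((lam k : ℝ):ℂ) * Complex.I)) * Complex.exp ((γ:ℝ) * Complex.I) := by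
          ring
      _ = ((r:ℝ):ℂ) * (Complex.exp (((-γ+θ:ℝ):ℂ) * Complex.I) * Complex.exp ((γ:ℝ) * Complex.I)) := by
          rw [heq]; ring
      _ = ((r:ℝ):ℂ) * Complex.exp ((θ:ℝ) * Complex.I) := by rw [hmul]
      _ = ((creal:ℝ):ℂ) * (((r / creal:ℝ):ℂ) * Complex.exp ((θ:ℝ) * Complex.I)) := by
          rw [show ((creal:ℝ):ℂ) * (((r / creal:ℝ):ℂ) * Complex.exp ((θ:ℝ) * Complex.I))
            = (((creal:ℝ):ℂ) * ((r / creal:ℝ):ℂ)) * Complex.exp ((θ:ℝ) * Complex.I) by ring]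
          congr 1
          push_cast
          field_simp
  choose ρf θf hρ hθ1 hθ2 hkey using key
  refine ⟨diagonal (fun k => ((Real.sqrt (ρf k) : ℝ):ℂ)) * Vᴴ * P,
    diagonal (fun k => Complex.exp ((θf k : ℝ) * Complex.I)), ?_, Matrix.isDiag_diagonal _, ?_, ?_⟩
  · refine (IsUnit.mul (IsUnit.mul ?_ ?_) ?_)
    · rw [Matrix.isUnit_iff_isUnit_det, det_diagonal, isUnit_iff_ne_zero]
      exact Finset.prod_ne_zero_iff.2 fun k _ =>
        Complex.ofReal_ne_zero.2 (Real.sqrt_pos.2 (hρ k)).ne'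
    · exact ⟨⟨Vᴴ, V, hVV', hVV⟩, rfl⟩
    · exact (Matrix.isUnit_iff_isUnit_det P).2 hPdet
  · have hTH : (diagonal (fun k => ((Real.sqrt (ρf k) : ℝ):ℂ)) * Vᴴ * P)ᴴ
        = P * V * diagonal (fun k => ((Real.sqrt (ρf k) : ℝ):ℂ)) := by
      have hstard : (diagonal (fun k => ((Real.sqrt (ρf k) : ℝ):ℂ)))ᴴ
          = diagonal (fun k => ((Real.sqrt (ρf k) : ℝ):ℂ)) := by
        rw [diagonal_conjTranspose]
        refine congrArg diagonal (funext fun k => ?_)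
        simp [Function.comp, Complex.star_def, Complex.conj_ofReal]
      rw [conjTranspose_mul, conjTranspose_mul, conjTranspose_conjTranspose, hPherm.eq,
        hstard, mul_assoc]
    rw [hTH]
    have hdd : diagonal (fun k => ((Real.sqrt (ρf k) : ℝ):ℂ))
          * diagonal (fun k => Complex.exp ((θf k : ℝ) * Complex.I))
          * diagonal (fun k => ((Real.sqrt (ρf k) : ℝ):ℂ))
        = diagonal (fun k => (1 + ((lam k : ℝ):ℂ) * Complex.I)
            * Complex.exp ((γ:ℝ) * Complex.I)) := by
      rw [diagonal_mul_diagonal, diagonal_mul_diagonal]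
      refine congrArg diagonal (funext fun k => ?_)
      rw [hkey k]
      rw [show ((Real.sqrt (ρf k) : ℝ):ℂ) * Complex.exp ((θf k : ℝ) * Complex.I)
            * ((Real.sqrt (ρf k) : ℝ):ℂ)
          = ((Real.sqrt (ρf k) * Real.sqrt (ρf k) : ℝ):ℂ) * Complex.exp ((θf k : ℝ) * Complex.I)
          by push_cast; ring,
        Real.mul_self_sqrt (hρ k).le]
    have hsmuldiag : Complex.exp ((γ:ℝ) * Complex.I)
          • diagonal (fun k => 1 + ((lam k : ℝ):ℂ) * Complex.I)
        = diagonal (fun k => (1 + ((lam k : ℝ):ℂ) * Complex.I)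
            * Complex.exp ((γ:ℝ) * Complex.I)) := by
      rw [← diagonal_smul]
      refine congrArg diagonal (funext fun k => ?_)
      simp only [Pi.smul_apply, smul_eq_mul]
      ring
    calc C = Complex.exp ((γ:ℝ) * Complex.I) • C' := by
          rw [hC', smul_smul, exp_I_mul_exp_I]
          simp
      _ = Complex.exp ((γ:ℝ) * Complex.I)
            • (P * (V * diagonal (fun k => 1 + ((lam k : ℝ):ℂ) * Complex.I) * Vᴴ) * P) := by
          rw [← hBspec, ← hC'B]
      _ = P * V * (Complex.exp ((γ:ℝ) * Complex.I)
            • diagonal (fun k => 1 + ((lam k : ℝ):ℂ) * Complex.I)) * Vᴴ * P := by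
          simp only [Matrix.mul_smul, Matrix.smul_mul, mul_assoc]
      _ = P * V * (diagonal (fun k => ((Real.sqrt (ρf k) : ℝ):ℂ))
            * diagonal (fun k => Complex.exp ((θf k : ℝ) * Complex.I))
            * diagonal (fun k => ((Real.sqrt (ρf k) : ℝ):ℂ))) * Vᴴ * P := by
          rw [hdd, hsmuldiag]
      _ = P * V * diagonal (fun k => ((Real.sqrt (ρf k) : ℝ):ℂ))
            * diagonal (fun k => Complex.exp ((θf k : ℝ) * Complex.I))
            * (diagonal (fun k => ((Real.sqrt (ρf k) : ℝ):ℂ)) * Vᴴ * P) := by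
          simp only [mul_assoc]
  · intro i
    exact ⟨θf i, hθ1 i, hθ2 i, by rw [Matrix.diagonal_apply_eq]⟩


end Backward

theorem series_connection_preserves_phases {n : ℕ}
    (Za Zb : Matrix (Fin n) (Fin n) ℂ) (α β : ℝ)
    (hαβ : β - α < Real.pi) (ha : MemZ Za α β) (hb : MemZ Zb α β) :
    MemZ (Za + Zb) α β := by
  rcases Nat.eq_zero_or_pos n with hn | hn
  · subst hn
    constructor
    · rintro ⟨x, hx1, -⟩
      simp [dotProduct] at hx1
    · refine ⟨1, 1, isUnit_one, Matrix.isDiag_one, ?_, fun i => i.elim0⟩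
      apply Matrix.ext
      intro i
      exact i.elim0
  · have hle : α ≤ β := by
      obtain ⟨T, D, hT, hD, hC, hθ⟩ := ha.2
      obtain ⟨θ, h1, h2, -⟩ := hθ ⟨0, hn⟩
      linarith
    have hq : ∀ x : Fin n → ℂ, x ≠ 0 → star x ⬝ᵥ (Za+Zb) *ᵥ x ∈ sector α β ∧
        0 < (Complex.exp ((-((α+β)/2):ℝ) * Complex.I) * (star x ⬝ᵥ (Za+Zb) *ᵥ x)).re := by
      intro x hx
      have hsum : star x ⬝ᵥ (Za+Zb) *ᵥ x = star x ⬝ᵥ Za *ᵥ x + star x ⬝ᵥ Zb *ᵥ x := by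
        rw [add_mulVec, dotProduct_add]
      rw [hsum]
      obtain ⟨ha1, ha2⟩ := phases_quad hle hαβ ha.2 x hx
      obtain ⟨hb1, hb2⟩ := phases_quad hle hαβ hb.2 x hx
      refine ⟨sector_add hle hαβ ha1 hb1, ?_⟩
      rw [mul_add, Complex.add_re]
      linarith
    refine ⟨?_, quad_phasesIn hle hαβ hq⟩
    rintro ⟨x, hx1, hx2⟩
    have hx : x ≠ 0 := by
      intro h0
      rw [h0] at hx1
      simp at hx1
    have hpos := (hq x hx).2
    rw [hx2] at hpos
    simp at hpos
end
end

section
/- Let Z^a, Z^b be n×n sectorial matrices partitioned as 2×2 blocks (with conformable block sizes r and n−r) and with all phases in [α, β], β − α < π. Then the hybrid connection Z^c with blocks Z^c₁₁ = Z^a₁₁ + Z^b₁₁ − (Z^a₁₂ − Z^b₁₂)(Z^a₂₂ + Z^b₂₂)⁻¹(Z^a₂₁ − Z^b₂₁), Z^c₁₂ = Z^a₁₂ − (Z^a₁₂ − Z^b₁₂)(Z^a₂₂ + Z^b₂₂)⁻¹ Z^a₂₂, Z^c₂₁ = Z^a₂₁ − Z^a₂₂(Z^a₂₂ + Z^b₂₂)⁻¹(Z^a₂₁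 − Z^b₂₁), Z^c₂₂ = Z^a₂₂(Z^a₂₂ + Z^b₂₂)⁻¹ Z^b₂₂, is sectorial with all phases in [α, β]. -/
open Matrix Complex

noncomputable section

namespace HybridAux

variable {n : Type*} [Fintype n]

def qf (M : Matrix n n ℂ) (x : n → ℂ) : ℂ := star x ⬝ᵥ M.mulVec x

lemma qf_add (M N : Matrix n n ℂ) (x : n → ℂ) : qf (M + N) x = qf M x + qf N x := by
  simp [qf, add_mulVec, dotProduct_add]

lemma qf_smul (c : ℂ) (M : Matrix n n ℂ) (x : n → ℂ) : qf (c • M) x = c * qf M x := by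
  simp [qf, smul_mulVec, dotProduct_smul, smul_eq_mul]

lemma qf_conj (M T : Matrix n n ℂ) (x : n → ℂ) : qf (Tᴴ * M * T) x = qf M (T *ᵥ x) := by
  rw [qf, qf, mul_assoc, ← mulVec_mulVec, dotProduct_mulVec, ← star_mulVec, mulVec_mulVec]

lemma qf_conjTranspose (M : Matrix n n ℂ) (x : n → ℂ) : qf Mᴴ x = star (qf M x) := by
  rw [qf, qf, dotProduct_mulVec, ← star_mulVec, star_dotProduct]

lemma qf_isDiag [DecidableEq n] {D : Matrix n n ℂ} (hD : D.IsDiag) (y : n → ℂ) :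
    qf D y = ∑ i, (normSq (y i) : ℂ) * D i i := by
  rw [qf, dotProduct]
  refine Finset.sum_congr rfl fun i _ => ?_
  have hmv : (D *ᵥ y) i = D i i * y i := by
    conv_lhs => rw [← hD.diagonal_diag]
    rw [mulVec_diagonal]
    rfl
  show star (y i) * (D *ᵥ y) i = _
  rw [hmv, Complex.star_def, mul_left_comm, ← Complex.normSq_eq_conj_mul_self, mul_comm]

lemma phases_bounds {n : Type*} [Fintype n] [DecidableEq n] {M : Matrix n n ℂ} {α β γ w : ℝ}
    (h : PhasesIn M α β) (hγ : γ = (α+β)/2) (hw : w = (β-α)/2)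
    (hwlt : w < Real.pi/2) (x : n → ℂ) :
    0 ≤ (Complex.exp (-(γ:ℂ)*I) * qf M x).re ∧
      Real.cos w * |(Complex.exp (-(γ:ℂ)*I) * qf M x).im| ≤
        Real.sin w * (Complex.exp (-(γ:ℂ)*I) * qf M x).re ∧
      (x ≠ 0 → 0 < (Complex.exp (-(γ:ℂ)*I) * qf M x).re) := by
  obtain ⟨T, D, hT, hD, hMdec, hph⟩ := h
  choose θ hθ1 hθ2 hθ3 using hph
  set y := T *ᵥ x with hy
  have hq : Complex.exp (-(γ:ℂ)*I) * qf M x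
      = ∑ i, (normSq (y i) : ℂ) * Complex.exp (((θ i - γ : ℝ) : ℂ) * I) := by
    rw [hMdec, qf_conj, qf_isDiag hD, Finset.mul_sum]
    refine Finset.sum_congr rfl fun i _ => ?_
    rw [hθ3 i, mul_left_comm, ← Complex.exp_add]
    congr 2
    push_cast
    ring
  have hδ : ∀ i, |θ i - γ| ≤ w := fun i => by
    rw [abs_le]; constructor <;> [linarith [hθ1 i]; linarith [hθ2 i]]
  have hre : (Complex.exp (-(γ:ℂ)*I) * qf M x).re
      = ∑ i, normSq (y i) * Real.cos (θ i - γ) := by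
    rw [hq, Complex.re_sum]
    refine Finset.sum_congr rfl fun i _ => ?_
    rw [Complex.mul_re, Complex.ofReal_re, Complex.ofReal_im, Complex.exp_ofReal_mul_I_re,
      Complex.exp_ofReal_mul_I_im]
    ring
  have him : (Complex.exp (-(γ:ℂ)*I) * qf M x).im
      = ∑ i, normSq (y i) * Real.sin (θ i - γ) := by
    rw [hq, Complex.im_sum]
    refine Finset.sum_congr rfl fun i _ => ?_
    rw [Complex.mul_im, Complex.ofReal_re, Complex.ofReal_im, Complex.exp_ofReal_mul_I_re,
      Complex.exp_ofReal_mul_I_im]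
    ring
  have hcosnn : ∀ i, 0 ≤ Real.cos (θ i - γ) := fun i => by
    have := abs_le.mp (hδ i)
    have hpi := Real.pi_pos
    refine Real.cos_nonneg_of_mem_Icc ⟨by linarith, by linarith⟩
  have hrenn : 0 ≤ (Complex.exp (-(γ:ℂ)*I) * qf M x).re := by
    rw [hre]
    exact Finset.sum_nonneg fun i _ => mul_nonneg (normSq_nonneg _) (hcosnn i)
  refine ⟨hrenn, ?_, ?_⟩
  · -- cos w * |im| ≤ sin w * re
    rcases isEmpty_or_nonempty n with hn | hn
    · rw [hre, him]
      simp
    · have hw0 : 0 ≤ w := by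
        obtain ⟨i⟩ := hn
        have := hθ1 i; have := hθ2 i
        rw [hw]; linarith
      have hterm : ∀ i, Real.cos w * |Real.sin (θ i - γ)| ≤ Real.sin w * Real.cos (θ i - γ) := by
        intro i
        have habs := abs_le.mp (hδ i)
        have hpi := Real.pi_pos
        have h1 : 0 ≤ Real.sin (w - |θ i - γ|) :=
          Real.sin_nonneg_of_nonneg_of_le_pi (by linarith [hδ i])
            (by linarith [abs_nonneg (θ i - γ)])
        rw [Real.sin_sub] at h1
        have hsinabs : Real.sin |θ i - γ| = |Real.sin (θ i - γ)| := by
          rcases le_or_gt 0 (θ i - γ) with h3 | h3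
          · rw [_root_.abs_of_nonneg h3,
              _root_.abs_of_nonneg (Real.sin_nonneg_of_nonneg_of_le_pi h3 (by linarith))]
          · rw [abs_of_neg h3, Real.sin_neg,
              _root_.abs_of_nonpos
                (Real.sin_nonpos_of_nonpos_of_neg_pi_le (le_of_lt h3) (by linarith))]
        rw [hsinabs, Real.cos_abs] at h1
        linarith
      rw [hre, him]
      calc Real.cos w * |∑ i, normSq (y i) * Real.sin (θ i - γ)|
          ≤ Real.cos w * ∑ i, normSq (y i) * |Real.sin (θ i - γ)| := by
            refine mul_le_mul_of_nonneg_left ?_ (Real.cos_nonneg_of_mem_Icc ⟨by linarith [Real.pi_pos], by linarith⟩)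
            refine (Finset.abs_sum_le_sum_abs _ _).trans ?_
            refine le_of_eq (Finset.sum_congr rfl fun i _ => ?_)
            rw [abs_mul, _root_.abs_of_nonneg (normSq_nonneg _)]
        _ ≤ Real.sin w * ∑ i, normSq (y i) * Real.cos (θ i - γ) := by
            rw [Finset.mul_sum, Finset.mul_sum]
            refine Finset.sum_le_sum fun i _ => ?_
            have := hterm i
            have hnn := normSq_nonneg (y i)
            calc Real.cos w * (normSq (y i) * |Real.sin (θ i - γ)|)
                = normSq (y i) * (Real.cos w * |Real.sin (θ i - γ)|) := by ring
              _ ≤ normSq (y i) * (Real.sin w * Real.cos (θ i - γ)) :=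
                  mul_le_mul_of_nonneg_left (hterm i) hnn
              _ = Real.sin w * (normSq (y i) * Real.cos (θ i - γ)) := by ring
  · intro hx
    have hy0 : y ≠ 0 := by
      intro h0
      apply hx
      have hdet := (Matrix.isUnit_iff_isUnit_det T).mp hT
      have : T⁻¹ *ᵥ y = x := by
        rw [hy, mulVec_mulVec, Matrix.nonsing_inv_mul T hdet, one_mulVec]
      rw [h0, mulVec_zero] at this
      exact this.symm
    obtain ⟨i, hi⟩ := Function.ne_iff.mp hy0
    rw [hre]
    refine Finset.sum_pos' (fun j _ => mul_nonneg (normSq_nonneg _) (hcosnn j)) ⟨i, Finset.mem_univ i, ?_⟩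
    have habs := abs_le.mp (hδ i)
    refine mul_pos (normSq_pos.mpr ?_) (Real.cos_pos_of_mem_Ioo ⟨by linarith, by linarith⟩)
    simpa using hi


open ComplexOrder in
lemma construct {n : Type*} [Fintype n] [DecidableEq n] {M : Matrix n n ℂ} {α β γ w : ℝ}
    (hγ : γ = (α+β)/2) (hw : w = (β-α)/2) (hw0 : 0 ≤ w) (hwlt : w < Real.pi/2)
    (hb : ∀ x : n → ℂ, Real.cos w * |(Complex.exp (-(γ:ℂ)*I) * qf M x).im| ≤
        Real.sin w * (Complex.exp (-(γ:ℂ)*I) * qf M x).re)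
    (hc : ∀ x : n → ℂ, x ≠ 0 → 0 < (Complex.exp (-(γ:ℂ)*I) * qf M x).re) :
    MemZ M α β := by
  have hpi := Real.pi_pos
  constructor
  · -- Sectorial
    rintro ⟨x, hx1, hx2⟩
    have hx0 : x ≠ 0 := by
      rintro rfl
      simp [dotProduct] at hx1
    have h := hc x hx0
    simp only [qf] at h
    rw [hx2, mul_zero] at h
    simp at h
  -- PhasesIn
  set A := Complex.exp (-(γ:ℂ)*I) • M with hA
  have hqfA : ∀ x, qf A x = Complex.exp (-(γ:ℂ)*I) * qf M x := fun x => qf_smul _ _ _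
  set H := ((1:ℂ)/2) • (A + Aᴴ) with hH0
  have hhalf : star ((1:ℂ)/2) = ((1:ℂ)/2) := by
    rw [star_div₀, star_one, Complex.star_def, Complex.conj_ofNat]
  have hHherm : H.IsHermitian := by
    show Hᴴ = H
    rw [hH0, conjTranspose_smul, conjTranspose_add, conjTranspose_conjTranspose, hhalf,
      add_comm Aᴴ A]
  have hqfH : ∀ x, qf H x = (((qf A x).re : ℝ) : ℂ) := by
    intro x
    rw [hH0, qf_smul, qf_add, qf_conjTranspose, Complex.star_def, Complex.add_conj]
    push_cast
    ring
  have hHpd : H.PosDef := by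
    refine Matrix.PosDef.of_dotProduct_mulVec_pos hHherm fun x hx => ?_
    have h1 := hc x hx
    have h0 : dotProduct (star x) (H *ᵥ x) = qf H x := rfl
    rw [h0, hqfH x, hqfA x, Complex.zero_lt_real]
    exact h1
  have hHpsd := hHpd.posSemidef
  open scoped MatrixOrder in set S := CFC.sqrt H with hSdef
  have hSherm : S.IsHermitian := by
    open scoped MatrixOrder in exact (CFC.sqrt_nonneg H).posSemidef.1
  have hSS : S * S = H := by
    open scoped MatrixOrder in exact CFC.sqrt_mul_sqrt_self H hHpsd.nonneg
  have hHunit : IsUnit H := hHpd.isUnit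
  have hdetH := (Matrix.isUnit_iff_isUnit_det H).mp hHunit
  have hSunit : IsUnit S := by
    refine (Matrix.isUnit_iff_isUnit_det S).mpr (Matrix.isUnit_det_of_right_inverse (B := S * H⁻¹) ?_)
    rw [← mul_assoc, hSS, Matrix.mul_nonsing_inv _ hdetH]
  have hdetS := (Matrix.isUnit_iff_isUnit_det S).mp hSunit
  have hS1 : S⁻¹ * S = 1 := Matrix.nonsing_inv_mul _ hdetS
  have hS2 : S * S⁻¹ = 1 := Matrix.mul_nonsing_inv _ hdetS
  have hSih : (S⁻¹).IsHermitian := by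
    show (S⁻¹)ᴴ = S⁻¹
    rw [Matrix.conjTranspose_nonsing_inv, hSherm.eq]
  set K := (-(I/2)) • (A - Aᴴ) with hK0
  have hKherm : K.IsHermitian := by
    show Kᴴ = K
    rw [hK0, conjTranspose_smul, conjTranspose_sub, conjTranspose_conjTranspose]
    have h1 : star (-(I/2)) = I/2 := by simp [Complex.ext_iff]; norm_num
    rw [h1, ← neg_sub A Aᴴ, smul_neg, ← neg_smul]
  have hAHK : A = H + I • K := by
    have h1 : (I:ℂ) • K = ((1:ℂ)/2) • (A - Aᴴ) := by
      rw [hK0, smul_smul]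
      congr 1
      rw [mul_neg, ← mul_div_assoc, Complex.I_mul_I]
      norm_num
    rw [h1, hH0, ← smul_add, show A + Aᴴ + (A - Aᴴ) = (2:ℂ) • A from by rw [two_smul]; abel,
      smul_smul]
    norm_num
  set K' := S⁻¹ * K * S⁻¹ with hK'0
  have hK'h : K'.IsHermitian := by
    show K'ᴴ = K'
    rw [hK'0, conjTranspose_mul, conjTranspose_mul, hSih.eq, hKherm.eq, mul_assoc]
  set κ := hK'h.eigenvalues with hκ0
  set U := (hK'h.eigenvectorUnitary : Matrix n n ℂ) with hU0
  have hU2 : U * star U = 1 := Matrix.mem_unitaryGroup_iff.mp (hK'h.eigenvectorUnitary).2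
  have hU1 : star U * U = 1 := Matrix.mem_unitaryGroup_iff'.mp (hK'h.eigenvectorUnitary).2
  have hspec : K' = U * diagonal (RCLike.ofReal ∘ κ) * star U := hK'h.spectral_theorem
  -- eigenvalue bound
  have hqfK' : ∀ x, qf K' x = qf K (S⁻¹ *ᵥ x) := by
    intro x
    conv_lhs => rw [hK'0, show S⁻¹ * K * S⁻¹ = (S⁻¹)ᴴ * K * S⁻¹ from by rw [hSih.eq]]
    exact qf_conj _ _ _
  have hqf1 : ∀ x, qf H (S⁻¹ *ᵥ x) = star x ⬝ᵥ x := by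
    intro x
    have h1 : (S⁻¹)ᴴ * H * S⁻¹ = 1 := by
      rw [hSih.eq, ← hSS, ← mul_assoc S⁻¹ S S, hS1, one_mul, hS2]
    rw [← qf_conj, h1, qf, one_mulVec]
  have hκb : ∀ j, Real.cos w * |κ j| ≤ Real.sin w := by
    intro j
    set v : n → ℂ := ⇑(hK'h.eigenvectorBasis j) with hv0
    have hv1 : star v ⬝ᵥ v = 1 := by
      have h2 : v = U *ᵥ Pi.single j 1 := (hK'h.eigenvectorUnitary_mulVec j).symm
      have h3 : star v ⬝ᵥ v = qf 1 v := by rw [qf, one_mulVec]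
      rw [h3, h2, ← qf_conj 1 U (Pi.single j 1), mul_one, ← Matrix.star_eq_conjTranspose, hU1]
      simp [qf, one_mulVec, dotProduct, Pi.single_apply, apply_ite]
    have hKv : qf K' v = ((κ j : ℝ) : ℂ) := by
      rw [qf, hK'h.mulVec_eigenvectorBasis j, dotProduct_smul, hv1]
      simp [Complex.real_smul, hκ0]
    have hval : Complex.exp (-(γ:ℂ)*I) * qf M (S⁻¹ *ᵥ v) = 1 + I * ((κ j : ℝ) : ℂ) := by
      rw [← hqfA, hAHK, qf_add, hqf1, hv1, qf_smul, ← hqfK', hKv]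
    have hbv := hb (S⁻¹ *ᵥ v)
    rw [hval] at hbv
    simpa using hbv
  have hcw : 0 < Real.cos w := Real.cos_pos_of_mem_Ioo ⟨by linarith, hwlt⟩
  have hκtan : ∀ j, |κ j| ≤ Real.tan w := by
    intro j
    rw [Real.tan_eq_sin_div_cos, le_div_iff₀ hcw]
    calc |κ j| * Real.cos w = Real.cos w * |κ j| := by ring
      _ ≤ Real.sin w := hκb j
  have hφb : ∀ j, |Real.arctan (κ j)| ≤ w := by
    intro j
    have hmono := Real.arctan_strictMono.monotone
    have h2 : Real.arctan |κ j| ≤ w := by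
      have h3 := hmono (hκtan j)
      rwa [Real.arctan_tan (by linarith) hwlt] at h3
    rcases le_or_gt 0 (κ j) with h | h
    · have h3 : 0 ≤ Real.arctan (κ j) := by
        have h4 := hmono h
        rwa [Real.arctan_zero] at h4
      rw [_root_.abs_of_nonneg h3]
      rwa [_root_.abs_of_nonneg h] at h2
    · have h3 : Real.arctan (κ j) ≤ 0 := by
        have h4 := hmono h.le
        rwa [Real.arctan_zero] at h4
      rw [_root_.abs_of_nonpos h3, ← neg_neg (Real.arctan (κ j)), ← Real.arctan_neg, neg_neg]
      rwa [abs_of_neg h] at h2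
  -- the decomposition
  set φv : n → ℝ := fun j => Real.arctan (κ j) with hφ0
  set θv : n → ℝ := fun j => γ + φv j with hθv0
  set cv : n → ℝ := fun j => Real.sqrt (1 + (κ j)^2) with hc0
  set ρv : n → ℝ := fun j => Real.sqrt (cv j) with hρ0
  have hcpos : ∀ j, 0 < cv j := fun j => Real.sqrt_pos.mpr (by positivity)
  have hρpos : ∀ j, 0 < ρv j := fun j => Real.sqrt_pos.mpr (hcpos j)
  set D₀ : Matrix n n ℂ := diagonal (fun j => ((ρv j : ℝ) : ℂ)) with hD₀
  set Dm : Matrix n n ℂ := diagonal (fun j => Complex.exp (((θv j : ℝ) : ℂ) * I)) with hDm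
  set T := D₀ * star U * S with hT0
  set E : Matrix n n ℂ := diagonal (fun j => 1 + ((κ j : ℝ) : ℂ) * I) with hE0
  have hz : ∀ j, ((ρv j : ℝ) : ℂ) * Complex.exp (((θv j : ℝ) : ℂ) * I) * ((ρv j : ℝ) : ℂ)
      = Complex.exp ((γ:ℂ)*I) * (1 + ((κ j : ℝ) : ℂ) * I) := by
    intro j
    have hρρ : ((ρv j : ℝ) : ℂ) * ((ρv j : ℝ) : ℂ) = ((cv j : ℝ) : ℂ) := by
      rw [← Complex.ofReal_mul, hρ0]
      simp only
      rw [Real.mul_self_sqrt (hcpos j).le]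
    have hθs : (((θv j : ℝ)) : ℂ) * I = (γ:ℂ)*I + ((φv j : ℝ) : ℂ)*I := by
      simp only [hθv0]
      push_cast
      ring
    have hs0 : Real.sqrt (1 + (κ j)^2) ≠ 0 := ne_of_gt (Real.sqrt_pos.mpr (by positivity))
    have hsC : ((Real.sqrt (1 + (κ j)^2) : ℝ) : ℂ) ≠ 0 := Complex.ofReal_ne_zero.mpr hs0
    have hexpφ : Complex.exp (((φv j : ℝ) : ℂ) * I)
        = ((Real.cos (φv j) : ℝ) : ℂ) + ((Real.sin (φv j) : ℝ) : ℂ) * I := by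
      rw [Complex.exp_mul_I, Complex.ofReal_cos, Complex.ofReal_sin]
    calc ((ρv j : ℝ) : ℂ) * Complex.exp (((θv j : ℝ) : ℂ) * I) * ((ρv j : ℝ) : ℂ)
        = (((ρv j : ℝ) : ℂ) * ((ρv j : ℝ) : ℂ)) * Complex.exp (((θv j : ℝ) : ℂ) * I) := by ring
      _ = ((cv j : ℝ) : ℂ) * (Complex.exp ((γ:ℂ)*I) *
            (((Real.cos (φv j) : ℝ) : ℂ) + ((Real.sin (φv j) : ℝ) : ℂ) * I)) := by
          rw [hρρ, hθs, Complex.exp_add, hexpφ]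
      _ = Complex.exp ((γ:ℂ)*I) * (1 + ((κ j : ℝ) : ℂ) * I) := by
          simp only [hφ0, hc0]
          rw [Real.cos_arctan, Real.sin_arctan]
          push_cast
          field_simp
  have hdiag : D₀ * Dm * D₀ = Complex.exp ((γ:ℂ)*I) • E := by
    rw [hD₀, hDm, diagonal_mul_diagonal, diagonal_mul_diagonal, hE0, ← diagonal_smul]
    refine congrArg Matrix.diagonal (funext fun j => ?_)
    rw [Pi.smul_apply, smul_eq_mul]
    exact hz j
  have hEdec : E = 1 + I • diagonal (RCLike.ofReal ∘ κ) := by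
    rw [hE0, ← Matrix.diagonal_one, ← diagonal_smul, diagonal_add]
    refine congrArg Matrix.diagonal (funext fun j => ?_)
    rw [Pi.smul_apply, Function.comp_apply, smul_eq_mul]
    rw [show (RCLike.ofReal (κ j) : ℂ) = ((κ j : ℝ) : ℂ) from rfl]
    ring
  have hUEU : U * E * star U = 1 + I • K' := by
    rw [hEdec, mul_add, add_mul, mul_one, hU2, mul_smul_comm, smul_mul_assoc, ← hspec]
  have hSKS : S * K' * S = K := by
    rw [hK'0, ← mul_assoc S (S⁻¹ * K) S⁻¹, ← mul_assoc S S⁻¹ K, hS2, one_mul, mul_assoc K S⁻¹ S,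
      hS1, mul_one]
  have hSES : S * (U * E * star U) * S = H + I • K := by
    rw [hUEU, mul_add, add_mul, mul_one, hSS, mul_smul_comm, smul_mul_assoc, hSKS]
  have hTH : Tᴴ = S * U * D₀ := by
    rw [hT0, conjTranspose_mul, conjTranspose_mul, hSherm.eq]
    have h1 : (star U)ᴴ = U := by rw [← Matrix.star_eq_conjTranspose, star_star]
    have h2 : D₀ᴴ = D₀ := by
      rw [hD₀, diagonal_conjTranspose]
      refine congrArg Matrix.diagonal (funext fun j => ?_)
      simp [Pi.star_apply, Complex.star_def, Complex.conj_ofReal]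
    rw [h1, h2, ← mul_assoc]
  refine ⟨T, Dm, ?_, ?_, ?_, ?_⟩
  · -- IsUnit T
    refine IsUnit.mul (IsUnit.mul ?_ ?_) hSunit
    · rw [hD₀, Matrix.isUnit_iff_isUnit_det, det_diagonal]
      refine isUnit_iff_ne_zero.mpr (Finset.prod_ne_zero_iff.mpr fun j _ => ?_)
      exact Complex.ofReal_ne_zero.mpr (hρpos j).ne'
    · exact (Matrix.isUnit_iff_isUnit_det _).mpr (Matrix.isUnit_det_of_left_inverse (B := U) hU2)
  · rw [hDm]
    exact isDiag_diagonal _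
  · -- M = Tᴴ * Dm * T
    have hfinal : Tᴴ * Dm * T = M := by
      rw [hTH, hT0]
      have hassoc : S * U * D₀ * Dm * (D₀ * star U * S)
          = S * (U * ((D₀ * Dm * D₀) * (star U * S))) := by
        simp only [mul_assoc]
      rw [hassoc, hdiag, smul_mul_assoc, mul_smul_comm, mul_smul_comm]
      have h9 : S * (U * (E * (star U * S))) = H + I • K := by
        rw [← hSES]
        simp only [mul_assoc]
      rw [h9, ← hAHK, hA, smul_smul, ← Complex.exp_add]
      rw [show (γ:ℂ)*I + -(γ:ℂ)*I = 0 from by ring, Complex.exp_zero, one_smul]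
    exact hfinal.symm
  · intro j
    refine ⟨θv j, ?_, ?_, ?_⟩
    · have h1 := (abs_le.mp (hφb j)).1
      simp only [hθv0, hφ0]
      linarith [hγ, hw]
    · have h1 := (abs_le.mp (hφb j)).2
      simp only [hθv0, hφ0]
      linarith [hγ, hw]
    · rw [hDm, diagonal_apply_eq]


lemma star_sum_elim {p q : Type*} (u : p → ℂ) (v : q → ℂ) :
    star (Sum.elim u v) = Sum.elim (star u) (star v) := by
  funext i; cases i <;> rfl

lemma sum_elim_dot {p q : Type*} [Fintype p] [Fintype q] (u : p → ℂ) (v : q → ℂ)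
    (x : p → ℂ) (y : q → ℂ) :
    Sum.elim u v ⬝ᵥ Sum.elim x y = u ⬝ᵥ x + v ⬝ᵥ y := by
  simp [dotProduct, Fintype.sum_sum_type]

lemma sum_elim_eq_zero {p q : Type*} {f : p → ℂ} {g : q → ℂ}
    (h : Sum.elim f g = 0) : f = 0 ∧ g = 0 := by
  constructor
  · funext i; exact congrFun h (Sum.inl i)
  · funext i; exact congrFun h (Sum.inr i)

end HybridAux

open HybridAux in
theorem hybrid_connection_preserves_phases {l m : Type*} [Fintype l] [Fintype m]
    [DecidableEq l] [DecidableEq m]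
    (Za Zb : Matrix (l ⊕ m) (l ⊕ m) ℂ) (α β : ℝ)
    (hαβ : β - α < Real.pi) (ha : MemZ Za α β) (hb : MemZ Zb α β) :
    IsUnit (Za.toBlocks₂₂ + Zb.toBlocks₂₂) ∧
      MemZ (Matrix.fromBlocks
        (Za.toBlocks₁₁ + Zb.toBlocks₁₁ -
          (Za.toBlocks₁₂ - Zb.toBlocks₁₂) * (Za.toBlocks₂₂ + Zb.toBlocks₂₂)⁻¹ *
            (Za.toBlocks₂₁ - Zb.toBlocks₂₁))
        (Za.toBlocks₁₂ -
          (Za.toBlocks₁₂ - Zb.toBlocks₁₂) * (Za.toBlocks₂₂ + Zb.toBlocks₂₂)⁻¹ *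
            Za.toBlocks₂₂)
        (Za.toBlocks₂₁ -
          Za.toBlocks₂₂ * (Za.toBlocks₂₂ + Zb.toBlocks₂₂)⁻¹ *
            (Za.toBlocks₂₁ - Zb.toBlocks₂₁))
        (Za.toBlocks₂₂ * (Za.toBlocks₂₂ + Zb.toBlocks₂₂)⁻¹ * Zb.toBlocks₂₂)) α β := by
  obtain ⟨haS, haP⟩ := ha
  obtain ⟨hbS, hbP⟩ := hb
  rcases isEmpty_or_nonempty (l ⊕ m) with hE | hNE
  · -- degenerate empty case
    have hEm : IsEmpty m := ⟨fun i => hE.false (Sum.inr i)⟩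
    refine ⟨?_, ?_, ?_⟩
    · rw [Matrix.isUnit_iff_isUnit_det, Matrix.det_isEmpty]
      exact isUnit_one
    · rintro ⟨x, hx1, hx2⟩
      simp [dotProduct] at hx1
    · refine ⟨1, 1, isUnit_one, Matrix.isDiag_one, ?_, fun i => (hE.false i).elim⟩
      ext i j
      exact (hE.false i).elim
  -- main case
  set γ := (α+β)/2 with hγ
  set w := (β-α)/2 with hw
  have hαβle : α ≤ β := by
    obtain ⟨i0⟩ := hNE
    obtain ⟨T, D, _, _, _, hph⟩ := haP
    obtain ⟨θ0, h1, h2, _⟩ := hph i0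
    linarith
  have hw0 : 0 ≤ w := by rw [hw]; linarith
  have hwlt : w < Real.pi/2 := by rw [hw]; linarith
  have hQa := fun x => phases_bounds haP hγ hw hwlt x
  have hQb := fun x => phases_bounds hbP hγ hw hwlt x
  set A11 := Za.toBlocks₁₁ with hA11
  set A12 := Za.toBlocks₁₂ with hA12
  set A21 := Za.toBlocks₂₁ with hA21
  set A22 := Za.toBlocks₂₂ with hA22
  set B11 := Zb.toBlocks₁₁ with hB11
  set B12 := Zb.toBlocks₁₂ with hB12
  set B21 := Zb.toBlocks₂₁ with hB21
  set B22 := Zb.toBlocks₂₂ with hB22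
  set Sm := A22 + B22 with hSm
  -- invertibility of Sm
  have hkey0 : ∀ v : m → ℂ, v ≠ 0 → Sm *ᵥ v ≠ 0 := by
    intro v hv hzero
    set x : l ⊕ m → ℂ := Sum.elim 0 v with hx
    have hx0 : x ≠ 0 := by
      intro h0
      apply hv
      funext i
      exact congrFun h0 (Sum.inr i)
    have hsum : qf (Za + Zb) x = 0 := by
      have hblocks : Za + Zb = fromBlocks (A11+B11) (A12+B12) (A21+B21) Sm := by
        rw [hSm]
        conv_lhs => rw [← fromBlocks_toBlocks Za, ← fromBlocks_toBlocks Zb]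
        rw [fromBlocks_add]
      have h1 : (Za + Zb) *ᵥ x = Sum.elim ((A12 + B12) *ᵥ v) (Sm *ᵥ v) := by
        rw [hblocks, hx, fromBlocks_mulVec, Sum.elim_comp_inl, Sum.elim_comp_inr]
        simp [mulVec_zero]
      simp only [qf]
      rw [h1, hx, star_sum_elim, sum_elim_dot, hzero]
      simp
    have h2 : qf (Za + Zb) x = qf Za x + qf Zb x := qf_add _ _ _
    have h3 := (hQa x).2.2 hx0
    have h4 := (hQb x).2.2 hx0
    rw [h2] at hsum
    have h5 : (Complex.exp (-(γ:ℂ)*I) * (qf Za x + qf Zb x)).re = 0 := by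
      rw [hsum]; simp
    rw [mul_add, Complex.add_re] at h5
    linarith
  have hSmUnit : IsUnit Sm := by
    rw [Matrix.isUnit_iff_isUnit_det, isUnit_iff_ne_zero]
    intro hdet
    obtain ⟨v, hv0, hv⟩ := (Matrix.exists_mulVec_eq_zero_iff).mpr hdet
    exact hkey0 v hv0 hv
  have hdetSm := (Matrix.isUnit_iff_isUnit_det Sm).mp hSmUnit
  have hS1 : Sm⁻¹ * Sm = 1 := Matrix.nonsing_inv_mul _ hdetSm
  have hS2 : Sm * Sm⁻¹ = 1 := Matrix.mul_nonsing_inv _ hdetSm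
  refine ⟨hSmUnit, ?_⟩
  set X : Matrix m l ℂ := Sm⁻¹ * (B21 - A21) with hX
  set Y : Matrix m m ℂ := Sm⁻¹ * B22 with hY
  set Fa : Matrix (l ⊕ m) (l ⊕ m) ℂ := fromBlocks 1 0 X Y with hFa
  set Fb : Matrix (l ⊕ m) (l ⊕ m) ℂ := fromBlocks 1 0 (-X) (1 - Y) with hFb
  have hv21 : A21 + A22 * X = B21 - B22 * X := by
    have hSX : A22 * X + B22 * X = B21 - A21 := by
      rw [← Matrix.add_mul, ← hSm, hX, ← Matrix.mul_assoc, hS2, Matrix.one_mul]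
    rw [eq_sub_iff_add_eq, add_assoc, hSX]
    abel
  have hv22 : A22 * Y = B22 - B22 * Y := by
    have hSY : A22 * Y + B22 * Y = B22 := by
      rw [← Matrix.add_mul, ← hSm, hY, ← Matrix.mul_assoc, hS2, Matrix.one_mul]
    rw [eq_sub_iff_add_eq]
    exact hSY
  have hc1 : (A12 - B12) * (Sm⁻¹ * A22) + (A12 - B12) * (Sm⁻¹ * B22) = A12 - B12 := by
    rw [← Matrix.mul_add, ← Matrix.mul_add, ← hSm, hS1, Matrix.mul_one]
  have hVa : Za * Fa = fromBlocks (A11 + A12*X) (A12*Y) (B21 - B22*X) (B22 - B22*Y) := by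
    conv_lhs => rw [← fromBlocks_toBlocks Za]
    rw [hFa, fromBlocks_multiply, Matrix.fromBlocks_inj]
    refine ⟨by rw [Matrix.mul_one], by rw [Matrix.mul_zero, zero_add], ?_, ?_⟩
    · rw [Matrix.mul_one]; exact hv21
    · rw [Matrix.mul_zero, zero_add]; exact hv22
  have hVb : Zb * Fb = fromBlocks (B11 - B12*X) (B12 - B12*Y) (B21 - B22*X) (B22 - B22*Y) := by
    conv_lhs => rw [← fromBlocks_toBlocks Zb]
    rw [hFb, fromBlocks_multiply, Matrix.fromBlocks_inj]
    refine ⟨?_, ?_, ?_, ?_⟩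
    · rw [Matrix.mul_one, Matrix.mul_neg, ← sub_eq_add_neg]
    · rw [Matrix.mul_zero, zero_add, Matrix.mul_sub, Matrix.mul_one]
    · rw [Matrix.mul_one, Matrix.mul_neg, ← sub_eq_add_neg]
    · rw [Matrix.mul_zero, zero_add, Matrix.mul_sub, Matrix.mul_one]
  set Zc : Matrix (l ⊕ m) (l ⊕ m) ℂ :=
    fromBlocks (A11 + B11 - (A12 - B12) * Sm⁻¹ * (A21 - B21))
      (A12 - (A12 - B12) * Sm⁻¹ * A22)
      (A21 - A22 * Sm⁻¹ * (A21 - B21))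
      (A22 * Sm⁻¹ * B22) with hZc0
  have hkey : Zc = Faᴴ * (Za * Fa) + Fbᴴ * (Zb * Fb) := by
    rw [hZc0, hVa, hVb, hFa, hFb, fromBlocks_conjTranspose, fromBlocks_conjTranspose,
      fromBlocks_multiply, fromBlocks_multiply, fromBlocks_add, Matrix.fromBlocks_inj]
    refine ⟨?_, ?_, ?_, ?_⟩
    · rw [hX]
      simp only [Matrix.conjTranspose_neg, Matrix.conjTranspose_sub, Matrix.conjTranspose_one,
        Matrix.conjTranspose_zero, Matrix.add_mul, Matrix.sub_mul, Matrix.mul_add,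
        Matrix.mul_sub, Matrix.mul_one, Matrix.one_mul, Matrix.mul_zero, Matrix.zero_mul,
        Matrix.neg_mul, Matrix.mul_neg, Matrix.mul_assoc]
      abel
    · rw [Matrix.mul_assoc (A12 - B12) Sm⁻¹ A22, eq_sub_of_add_eq hc1, hY]
      simp only [Matrix.conjTranspose_neg, Matrix.conjTranspose_sub, Matrix.conjTranspose_one,
        Matrix.conjTranspose_zero, Matrix.add_mul, Matrix.sub_mul, Matrix.mul_add,
        Matrix.mul_sub, Matrix.mul_one, Matrix.one_mul, Matrix.mul_zero, Matrix.zero_mul,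
        Matrix.neg_mul, Matrix.mul_neg, Matrix.mul_assoc]
      abel
    · rw [← hv21, hX]
      simp only [Matrix.conjTranspose_neg, Matrix.conjTranspose_sub, Matrix.conjTranspose_one,
        Matrix.conjTranspose_zero, Matrix.add_mul, Matrix.sub_mul, Matrix.mul_add,
        Matrix.mul_sub, Matrix.mul_one, Matrix.one_mul, Matrix.mul_zero, Matrix.zero_mul,
        Matrix.neg_mul, Matrix.mul_neg, Matrix.mul_assoc]
      abel
    · rw [← hv22, hY]
      simp only [Matrix.conjTranspose_neg, Matrix.conjTranspose_sub, Matrix.conjTranspose_one,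
        Matrix.conjTranspose_zero, Matrix.add_mul, Matrix.sub_mul, Matrix.mul_add,
        Matrix.mul_sub, Matrix.mul_one, Matrix.one_mul, Matrix.mul_zero, Matrix.zero_mul,
        Matrix.neg_mul, Matrix.mul_neg, Matrix.mul_assoc]
      abel
  have hqfc : ∀ x, qf Zc x = qf Za (Fa *ᵥ x) + qf Zb (Fb *ᵥ x) := by
    intro x
    rw [hkey, qf_add, show Faᴴ * (Za * Fa) = Faᴴ * Za * Fa from (Matrix.mul_assoc _ _ _).symm,
      show Fbᴴ * (Zb * Fb) = Fbᴴ * Zb * Fb from (Matrix.mul_assoc _ _ _).symm, qf_conj, qf_conj]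
  have hne : ∀ x : l ⊕ m → ℂ, x ≠ 0 → Fa *ᵥ x ≠ 0 ∨ Fb *ᵥ x ≠ 0 := by
    intro x hx
    by_contra hcon
    push_neg at hcon
    obtain ⟨h1, h2⟩ := hcon
    apply hx
    rw [hFa, fromBlocks_mulVec] at h1
    rw [hFb, fromBlocks_mulVec] at h2
    obtain ⟨h1a, h1b⟩ := sum_elim_eq_zero h1
    obtain ⟨h2a, h2b⟩ := sum_elim_eq_zero h2
    rw [Matrix.one_mulVec, Matrix.zero_mulVec, add_zero] at h1a
    rw [h1a, Matrix.mulVec_zero, zero_add] at h1b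
    rw [h1a, Matrix.mulVec_zero, zero_add, Matrix.sub_mulVec, Matrix.one_mulVec] at h2b
    have hx2 : x ∘ Sum.inr = 0 := by
      rw [sub_eq_zero] at h2b
      rw [h2b, h1b]
    funext i
    cases i with
    | inl i => exact congrFun h1a i
    | inr i => exact congrFun hx2 i
  refine construct hγ hw hw0 hwlt ?_ ?_
  · intro x
    rw [hqfc x, mul_add, Complex.add_re, Complex.add_im, mul_add (Real.sin w)]
    have hcoswnn : 0 ≤ Real.cos w :=
      le_of_lt (Real.cos_pos_of_mem_Ioo ⟨by linarith [Real.pi_pos], hwlt⟩)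
    have ha2 := (hQa (Fa *ᵥ x)).2.1
    have hb2 := (hQb (Fb *ᵥ x)).2.1
    have habs := abs_add_le (Complex.exp (-(γ:ℂ)*I) * qf Za (Fa *ᵥ x)).im
      (Complex.exp (-(γ:ℂ)*I) * qf Zb (Fb *ᵥ x)).im
    have h6 := mul_le_mul_of_nonneg_left habs hcoswnn
    rw [mul_add] at h6
    linarith
  · intro x hx
    rw [hqfc x, mul_add, Complex.add_re]
    rcases hne x hx with h | h
    · have h7 := (hQa (Fa *ᵥ x)).2.2 h
      have h8 := (hQb (Fb *ᵥ x)).1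
      linarith
    · have h7 := (hQb (Fb *ᵥ x)).2.2 h
      have h8 := (hQa (Fa *ᵥ x)).1
      linarith
end
end

section
/- Let Z^a ∈ ℂ^{(r+s)×(r+s)} and Z^b ∈ ℂ^{(s+t)×(s+t)} be sectorial matrices with phases in [α, β], β − α < π. Then Z^a₂₂ + Z^b₁₁ is invertible and the cascade connection Z^c ∈ ℂ^{(r+t)×(r+t)} with blocks Z^c₁₁ = Z^a₁₁ − Z^a₁₂(Z^a₂₂ + Z^b₁₁)⁻¹ Z^a₂₁, Z^c₁₂ = Z^a₁₂(Z^a₂₂ + Z^b₁₁)⁻¹ Z^b₁₂, Z^c₂₁ = Z^b₂₁(Z^a₂₂ + Z^b₁₁)⁻¹ Z^a₂₁, Z^c₂₂ = Z^b₂₂ − Z^b₂₁(Z^a₂₂ + Z^b₁₁)⁻¹ Z^b₁₂, is sectorial with phases in [α, β]. -/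
open Matrix Complex

noncomputable section

namespace CasAux

open scoped ComplexOrder
open scoped MatrixOrder

/-- The rotated half-plane-type inequality characterizing the sector. -/
def inS (γ δ : ℝ) (z : ℂ) : Prop :=
  ‖z‖ * Real.cos δ ≤ (Complex.exp (-(γ : ℂ) * Complex.I) * z).re

lemma le_of_mem_sector {α β : ℝ} {z : ℂ} (h : z ∈ sector α β) : α ≤ β := by
  obtain ⟨r, θ, _, h1, h2, _⟩ := h; exact h1.trans h2

lemma zero_mem_sector {α β : ℝ} (h : α ≤ β) : (0 : ℂ) ∈ sector α β :=
  ⟨0, α, le_refl _, le_refl _, h, by simp⟩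

lemma inS_zero (γ δ : ℝ) : inS γ δ 0 := by simp [inS]

lemma inS_add {γ δ : ℝ} (hc : 0 ≤ Real.cos δ) {z w : ℂ} (hz : inS γ δ z) (hw : inS γ δ w) :
    inS γ δ (z + w) := by
  unfold inS at *
  calc ‖z + w‖ * Real.cos δ ≤ (‖z‖ + ‖w‖) * Real.cos δ := by
        exact mul_le_mul_of_nonneg_right (norm_add_le z w) hc
    _ ≤ (Complex.exp (-(γ : ℂ) * Complex.I) * z).re
        + (Complex.exp (-(γ : ℂ) * Complex.I) * w).re := by
        rw [add_mul]; exact add_le_add hz hw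
    _ = (Complex.exp (-(γ : ℂ) * Complex.I) * (z + w)).re := by
        rw [mul_add, Complex.add_re]

lemma inS_re_pos {γ δ : ℝ} (hc : 0 < Real.cos δ) {z : ℂ} (hz : inS γ δ z) (h0 : z ≠ 0) :
    0 < (Complex.exp (-(γ : ℂ) * Complex.I) * z).re :=
  lt_of_lt_of_le (mul_pos (norm_pos_iff.mpr h0) hc) hz

lemma mem_sector_iff_inS {α β : ℝ} (hle : α ≤ β) (hlt : β - α < Real.pi) (z : ℂ) :
    z ∈ sector α β ↔ inS ((α + β) / 2) ((β - α) / 2) z := by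
  set γ := (α + β) / 2
  set δ := (β - α) / 2
  have hδ0 : 0 ≤ δ := by simp [δ]; linarith
  have hδπ : δ < Real.pi / 2 := by simp only [δ]; linarith
  constructor
  · rintro ⟨r, θ, hr, h1, h2, rfl⟩
    unfold inS
    have habs : ‖(r : ℂ) * Complex.exp ((θ : ℂ) * Complex.I)‖ = r := by
      rw [norm_mul, Complex.norm_exp_ofReal_mul_I, Complex.norm_of_nonneg hr,
        mul_one]
    have hmul : Complex.exp (-(γ : ℂ) * Complex.I) * ((r : ℂ) * Complex.exp ((θ : ℂ) * Complex.I))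
        = (r : ℂ) * Complex.exp ((((θ - γ : ℝ)) : ℂ) * Complex.I) := by
      rw [mul_comm ((r:ℂ)) _, ← mul_assoc, ← Complex.exp_add]
      push_cast; ring_nf
    rw [habs, hmul]
    have hre : ((r : ℂ) * Complex.exp (((θ - γ : ℝ) : ℂ) * Complex.I)).re
        = r * Real.cos (θ - γ) := by
      push_cast
      simp [Complex.mul_re, Complex.exp_re, Complex.exp_im]
    rw [hre]
    have hcos : Real.cos δ ≤ Real.cos (θ - γ) := by
      rw [← Real.cos_abs (θ - γ)]
      apply Real.cos_le_cos_of_nonneg_of_le_pi (abs_nonneg _) (by linarith [Real.pi_pos])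
      rw [abs_le]; constructor <;> [skip; skip] <;> simp only [γ, δ] <;> linarith
    exact mul_le_mul_of_nonneg_left hcos hr
  · intro h
    by_cases h0 : z = 0
    · exact h0 ▸ zero_mem_sector hle
    · set w := Complex.exp (-(γ : ℂ) * Complex.I) * z with hw
      have hw0 : w ≠ 0 := mul_ne_zero (Complex.exp_ne_zero _) h0
      have habs : ‖w‖ = ‖z‖ := by
        rw [hw, norm_mul]
        have : (-(γ:ℂ) * Complex.I) = ((-γ : ℝ) : ℂ) * Complex.I := by push_cast; ring
        rw [this, Complex.norm_exp_ofReal_mul_I, one_mul]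
      have hcos : Real.cos δ ≤ Real.cos w.arg := by
        rw [Complex.cos_arg hw0, le_div_iff₀ (norm_pos_iff.mpr hw0)]
        have h' := h
        unfold inS at h'
        rw [← habs] at h'
        rw [mul_comm]
        exact h'
      have harg : |w.arg| ≤ δ := by
        by_contra hcon
        push_neg at hcon
        have : Real.cos |w.arg| < Real.cos δ :=
          Real.cos_lt_cos_of_nonneg_of_le_pi hδ0 (Complex.abs_arg_le_pi w) hcon
        rw [Real.cos_abs] at this; linarith
      refine ⟨‖z‖, γ + w.arg, norm_nonneg z, ?_, ?_, ?_⟩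
      · have := (abs_le.mp harg).1; simp only [γ, δ] at *; linarith
      · have := (abs_le.mp harg).2; simp only [γ, δ] at *; linarith
      · have hz : z = Complex.exp ((γ : ℂ) * Complex.I) * w := by
          rw [hw, ← mul_assoc, ← Complex.exp_add]
          norm_num
        have habs2 : ‖Complex.exp ((γ:ℂ) * Complex.I) * w‖ = ‖w‖ := by
          rw [norm_mul, Complex.norm_exp_ofReal_mul_I, one_mul]
        rw [hz, habs2]
        conv_lhs => rw [← Complex.norm_mul_exp_arg_mul_I w]
        rw [← mul_assoc, mul_comm (Complex.exp _) (((‖w‖ : ℝ) : ℂ)), mul_assoc,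
          ← Complex.exp_add]
        congr 1
        push_cast; ring

lemma cosδ_pos {α β : ℝ} (hle : α ≤ β) (hlt : β - α < Real.pi) :
    0 < Real.cos ((β - α) / 2) := by
  apply Real.cos_pos_of_mem_Ioo
  rw [Set.mem_Ioo]
  constructor <;> linarith [Real.pi_pos]

lemma sector_add_of {α β : ℝ} (hlt : β - α < Real.pi) {z w : ℂ}
    (hz : z ∈ sector α β) (hw : w ∈ sector α β) (hne : z ≠ 0 ∨ w ≠ 0) :
    z + w ∈ sector α β ∧ z + w ≠ 0 := by
  have hle : α ≤ β := le_of_mem_sector hz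
  have hc : 0 < Real.cos ((β - α) / 2) := cosδ_pos hle hlt
  rw [mem_sector_iff_inS hle hlt] at hz hw ⊢
  refine ⟨inS_add hc.le hz hw, ?_⟩
  have hpos : 0 < (Complex.exp (-(((α + β) / 2 : ℝ) : ℂ) * Complex.I) * (z + w)).re := by
    rw [mul_add, Complex.add_re]
    rcases hne with h | h
    · have h1 := inS_re_pos hc hz h
      have h2 : 0 ≤ (Complex.exp (-(((α + β) / 2 : ℝ) : ℂ) * Complex.I) * w).re :=
        le_trans (mul_nonneg (norm_nonneg _) hc.le) hw
      linarith
    · have h1 := inS_re_pos hc hw h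
      have h2 : 0 ≤ (Complex.exp (-(((α + β) / 2 : ℝ) : ℂ) * Complex.I) * z).re :=
        le_trans (mul_nonneg (norm_nonneg _) hc.le) hz
      linarith
  intro h0
  rw [h0] at hpos
  simp at hpos

lemma inS_sum {ι : Type*} (s : Finset ι) (f : ι → ℂ) {γ δ : ℝ} (hc : 0 ≤ Real.cos δ)
    (h : ∀ i ∈ s, inS γ δ (f i)) : inS γ δ (∑ i ∈ s, f i) := by
  classical
  induction s using Finset.cons_induction with
  | empty => simpa using inS_zero γ δ
  | cons a s ha ih =>
    rw [Finset.sum_cons]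
    exact inS_add hc (h a (Finset.mem_cons_self a s)) (ih fun i hi => h i (Finset.mem_cons.mpr (Or.inr hi)))

lemma sector_sum {ι : Type*} [Fintype ι] {α β : ℝ} (hlt : β - α < Real.pi) (f : ι → ℂ)
    (hf : ∀ i, f i ∈ sector α β) (i₀ : ι) (h0 : f i₀ ≠ 0) :
    (∑ i, f i) ∈ sector α β ∧ (∑ i, f i) ≠ 0 := by
  have hle : α ≤ β := le_of_mem_sector (hf i₀)
  have hc : 0 < Real.cos ((β - α) / 2) := cosδ_pos hle hlt
  have hf' : ∀ i, inS ((α + β) / 2) ((β - α) / 2) (f i) :=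
    fun i => (mem_sector_iff_inS hle hlt (f i)).mp (hf i)
  refine ⟨(mem_sector_iff_inS hle hlt _).mpr (inS_sum _ _ hc.le fun i _ => hf' i), ?_⟩
  have hpos : 0 < (Complex.exp (-(((α + β) / 2 : ℝ) : ℂ) * Complex.I) * ∑ i, f i).re := by
    rw [Finset.mul_sum, Complex.re_sum]
    apply Finset.sum_pos'
    · exact fun i _ => le_trans (mul_nonneg (norm_nonneg _) hc.le) (hf' i)
    · exact ⟨i₀, Finset.mem_univ _, inS_re_pos hc (hf' i₀) h0⟩
  intro hcon
  rw [hcon] at hpos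
  simp at hpos

lemma qf_of_memZ {ι : Type*} [Fintype ι] [DecidableEq ι] {C : Matrix ι ι ℂ} {α β : ℝ}
    (h : MemZ C α β) (hlt : β - α < Real.pi) {x : ι → ℂ} (hx : x ≠ 0) :
    star x ⬝ᵥ C.mulVec x ∈ sector α β ∧ star x ⬝ᵥ C.mulVec x ≠ 0 := by
  obtain ⟨-, T, D, hT, hdiag, hC, hph⟩ := h
  set y := T *ᵥ x with hy
  have hy0 : y ≠ 0 := by
    intro h0
    apply hx
    have hinj := (Matrix.mulVec_injective_iff_isUnit).mpr hT
    apply hinj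
    rw [← hy, h0, Matrix.mulVec_zero]
  obtain ⟨i₀, hi₀⟩ : ∃ i, y i ≠ 0 := by
    by_contra hcon; push_neg at hcon; exact hy0 (funext hcon)
  have hD : D = Matrix.diagonal D.diag := by
    ext i j
    by_cases hij : i = j
    · subst hij; simp [Matrix.diagonal_apply_eq, Matrix.diag]
    · rw [Matrix.diagonal_apply_ne _ hij, hdiag hij]
  have hqf : star x ⬝ᵥ C.mulVec x = ∑ i, (Complex.normSq (y i) : ℂ) * D i i := by
    show star x ⬝ᵥ (C *ᵥ x) = _
    rw [hC]
    rw [← Matrix.mulVec_mulVec, ← Matrix.mulVec_mulVec, Matrix.dotProduct_mulVec,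
      ← Matrix.star_mulVec, ← hy]
    conv_lhs => rw [hD]
    simp only [dotProduct, Matrix.mulVec_diagonal, Pi.star_apply]
    refine Finset.sum_congr rfl fun i _ => ?_
    rw [Complex.star_def, mul_comm (D.diag i) (y i), ← mul_assoc, Complex.normSq_eq_conj_mul_self]
    rfl
  rw [hqf]
  refine sector_sum hlt _ (fun i => ?_) i₀ ?_
  · obtain ⟨θ, hθ1, hθ2, hθ3⟩ := hph i
    exact ⟨Complex.normSq (y i), θ, Complex.normSq_nonneg _, hθ1, hθ2, by rw [hθ3]⟩
  · obtain ⟨θ, hθ1, hθ2, hθ3⟩ := hph i₀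
    rw [hθ3]
    exact mul_ne_zero (by simpa using hi₀) (Complex.exp_ne_zero _)

lemma qf_conjTranspose {ι : Type*} [Fintype ι] (M : Matrix ι ι ℂ) (x : ι → ℂ) :
    star x ⬝ᵥ Mᴴ *ᵥ x = star (star x ⬝ᵥ M *ᵥ x) := by
  rw [Matrix.dotProduct_mulVec, ← Matrix.star_mulVec]
  conv_lhs => rw [show x = star (star x) from (star_star x).symm]
  rw [Matrix.star_dotProduct_star, star_star]

lemma qf_smul {ι : Type*} [Fintype ι] (c : ℂ) (M : Matrix ι ι ℂ) (x : ι → ℂ) :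
    star x ⬝ᵥ (c • M) *ᵥ x = c * (star x ⬝ᵥ M *ᵥ x) := by
  rw [Matrix.smul_mulVec, dotProduct_smul, smul_eq_mul]

lemma qf_add {ι : Type*} [Fintype ι] (M N : Matrix ι ι ℂ) (x : ι → ℂ) :
    star x ⬝ᵥ (M + N) *ᵥ x = star x ⬝ᵥ M *ᵥ x + star x ⬝ᵥ N *ᵥ x := by
  rw [Matrix.add_mulVec, dotProduct_add]

lemma memZ_of_qf {ι : Type*} [Fintype ι] [DecidableEq ι] {C : Matrix ι ι ℂ} {α β : ℝ}
    (hlt : β - α < Real.pi)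
    (hQ : ∀ x : ι → ℂ, x ≠ 0 → star x ⬝ᵥ C.mulVec x ∈ sector α β ∧ star x ⬝ᵥ C.mulVec x ≠ 0) :
    MemZ C α β := by
  constructor
  · rintro ⟨x, hx1, hx2⟩
    have hx : x ≠ 0 := by
      intro h0; rw [h0] at hx1; simp at hx1
    exact (hQ x hx).2 hx2
  rcases isEmpty_or_nonempty ι with hι | hι
  · refine ⟨1, 1, isUnit_one, Matrix.isDiag_one, ?_, fun i => isEmptyElim i⟩
    ext i j; exact isEmptyElim i
  -- nonempty case
  have hx₀ : (Pi.single (Classical.arbitrary ι) 1 : ι → ℂ) ≠ 0 := by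
    intro h0
    have := congr_fun h0 (Classical.arbitrary ι)
    simp at this
  have hle : α ≤ β := le_of_mem_sector (hQ _ hx₀).1
  set γ : ℝ := (α + β) / 2 with hγ
  set δ : ℝ := (β - α) / 2 with hδ
  have hc : 0 < Real.cos δ := cosδ_pos hle hlt
  set C' : Matrix ι ι ℂ := Complex.exp (-(γ : ℂ) * Complex.I) • C with hC'
  have hre : ∀ x : ι → ℂ, x ≠ 0 → 0 < (star x ⬝ᵥ C' *ᵥ x).re := by
    intro x hx
    rw [hC', qf_smul]
    exact inS_re_pos hc ((mem_sector_iff_inS hle hlt _).mp (hQ x hx).1) (hQ x hx).2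
  set H : Matrix ι ι ℂ := (1 / 2 : ℂ) • (C' + C'ᴴ) with hH
  have hHherm : H.IsHermitian := by
    rw [Matrix.IsHermitian, hH, Matrix.conjTranspose_smul, Matrix.conjTranspose_add,
      Matrix.conjTranspose_conjTranspose]
    rw [show (star (1/2 : ℂ)) = (1/2 : ℂ) by simp [Complex.star_def, Complex.ext_iff], add_comm C'ᴴ C']
  have hHpd : H.PosDef := by
    refine Matrix.PosDef.of_dotProduct_mulVec_pos hHherm fun x hx => ?_
    have hqf : star x ⬝ᵥ H *ᵥ x = (1/2 : ℂ) * (star x ⬝ᵥ C' *ᵥ x + star (star x ⬝ᵥ C' *ᵥ x)) := by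
      rw [hH, qf_smul, qf_add, qf_conjTranspose]
    rw [hqf]
    have : star x ⬝ᵥ C' *ᵥ x + star (star x ⬝ᵥ C' *ᵥ x) = (2 * (star x ⬝ᵥ C' *ᵥ x).re : ℝ) := by
      rw [Complex.star_def, Complex.add_conj]
    rw [this]
    have h2 : (1/2 : ℂ) * ((2 * (star x ⬝ᵥ C' *ᵥ x).re : ℝ) : ℂ) = (((star x ⬝ᵥ C' *ᵥ x).re : ℝ) : ℂ) := by
      push_cast; ring
    rw [h2, Complex.zero_lt_real]
    exact hre x hx
  -- square root of the Hermitian part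
  set L : Matrix ι ι ℂ := CFC.sqrt H with hLdef
  have hLherm : L.IsHermitian := (CFC.sqrt_nonneg H).posSemidef.1
  have hLL : L * L = H := CFC.sqrt_mul_sqrt_self H hHpd.posSemidef.nonneg
  have hLunit : IsUnit L.det := by
    have hdet : L.det * L.det = H.det := by rw [← Matrix.det_mul, hLL]
    have hH0 : H.det ≠ 0 := hHpd.det_pos.ne'
    rw [isUnit_iff_ne_zero]
    intro h0
    rw [h0, mul_zero] at hdet
    exact hH0 hdet.symm
  have hL1 : L * L⁻¹ = 1 := Matrix.mul_nonsing_inv L hLunit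
  have hL2 : L⁻¹ * L = 1 := Matrix.nonsing_inv_mul L hLunit
  have hLinvherm : (L⁻¹)ᴴ = L⁻¹ := by
    rw [Matrix.conjTranspose_nonsing_inv, hLherm.eq]
  set K : Matrix ι ι ℂ := (-(Complex.I)/2) • (C' - C'ᴴ) with hK
  have hKherm : K.IsHermitian := by
    rw [Matrix.IsHermitian, hK, Matrix.conjTranspose_smul, Matrix.conjTranspose_sub,
      Matrix.conjTranspose_conjTranspose]
    rw [show (star (-(Complex.I)/2) : ℂ) = Complex.I/2 by
      simp [Complex.star_def, Complex.ext_iff]]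
    rw [← neg_sub C' C'ᴴ, smul_neg, ← neg_smul, neg_div]
  have hC'HK : C' = H + Complex.I • K := by
    rw [hH, hK, smul_smul]
    rw [show Complex.I * (-(Complex.I)/2) = (1/2 : ℂ) by
      linear_combination (-1/2 : ℂ) * Complex.I_mul_I]
    module
  set X : Matrix ι ι ℂ := L⁻¹ * K * L⁻¹ with hX
  have hXherm : X.IsHermitian := by
    rw [Matrix.IsHermitian, hX, Matrix.conjTranspose_mul, Matrix.conjTranspose_mul,
      hLinvherm, hKherm.eq, mul_assoc]
  have hLXL : L * X * L = K := by
    rw [hX]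
    have h1 : L * (L⁻¹ * K * L⁻¹) * L = L * L⁻¹ * (K * (L⁻¹ * L)) := by
      noncomm_ring
    rw [h1, hL1, hL2, mul_one, one_mul]
  set U : Matrix ι ι ℂ := (hXherm.eigenvectorUnitary : Matrix ι ι ℂ) with hUdef
  set lam : ι → ℝ := hXherm.eigenvalues with hlam
  have hspec : X = U * Matrix.diagonal (RCLike.ofReal ∘ lam) * star U := by
    have h := hXherm.spectral_theorem; rw [Unitary.conjStarAlgAut_apply] at h; exact h
  have hUU : U * star U = 1 := Matrix.mem_unitaryGroup_iff.mp hXherm.eigenvectorUnitary.2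
  have hU'U : star U * U = 1 := Matrix.mem_unitaryGroup_iff'.mp hXherm.eigenvectorUnitary.2
  -- the diagonal entries
  set d : ι → ℂ := fun j => Complex.exp ((γ : ℂ) * Complex.I) * (1 + Complex.I * (lam j : ℂ))
    with hd
  have hdne : ∀ j, d j ≠ 0 := by
    intro j
    apply mul_ne_zero (Complex.exp_ne_zero _)
    intro h0
    have := congr_arg Complex.re h0
    simp at this
  set D : Matrix ι ι ℂ := Matrix.diagonal (fun j => d j / (‖d j‖ : ℂ)) with hD
  set R : Matrix ι ι ℂ := Matrix.diagonal (fun j => (Real.sqrt (‖d j‖) : ℂ)) with hR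
  set T : Matrix ι ι ℂ := R * (star U * L) with hT
  have hRherm : Rᴴ = R := by
    rw [hR, Matrix.diagonal_conjTranspose]
    refine congrArg Matrix.diagonal (funext fun j' => ?_)
    show star ((Real.sqrt (‖d j'‖) : ℝ) : ℂ) = _
    rw [Complex.star_def, Complex.conj_ofReal]
  have hTH : Tᴴ = L * U * R := by
    rw [hT, Matrix.conjTranspose_mul, Matrix.conjTranspose_mul, hRherm, hLherm.eq,
      Matrix.star_eq_conjTranspose U, Matrix.conjTranspose_conjTranspose, mul_assoc]
  have hTunit : IsUnit T := by
    have hRunit : IsUnit R.det := by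
      rw [hR, Matrix.det_diagonal, isUnit_iff_ne_zero]
      apply Finset.prod_ne_zero_iff.mpr
      intro j _
      exact Complex.ofReal_ne_zero.mpr (Real.sqrt_ne_zero'.mpr (norm_pos_iff.mpr (hdne j)))
    have hUunit : IsUnit (star U).det :=
      IsUnit.of_mul_eq_one U.det (by rw [← Matrix.det_mul, hU'U, Matrix.det_one])
    apply (Matrix.isUnit_iff_isUnit_det T).mpr
    rw [hT, Matrix.det_mul, Matrix.det_mul]
    exact hRunit.mul (hUunit.mul hLunit)
  have hCexp : C = Complex.exp ((γ : ℂ) * Complex.I) • C' := by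
    rw [hC', smul_smul, ← Complex.exp_add,
      show (γ:ℂ) * Complex.I + -(γ:ℂ) * Complex.I = 0 by ring, Complex.exp_zero, one_smul]
  have hdiagd : Complex.exp ((γ:ℂ) * Complex.I) •
      ((1 : Matrix ι ι ℂ) + Complex.I • Matrix.diagonal (RCLike.ofReal ∘ lam))
      = Matrix.diagonal d := by
    rw [← Matrix.diagonal_one, ← Matrix.diagonal_smul, Matrix.diagonal_add,
      ← Matrix.diagonal_smul]
    refine congrArg Matrix.diagonal (funext fun j' => ?_)
    simp only [hd, Pi.add_apply, Pi.smul_apply, Pi.one_apply, Function.comp_apply,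
      smul_eq_mul]
    ring_nf
    rfl
  have hRDR : R * D * R = Matrix.diagonal d := by
    rw [hR, hD, Matrix.diagonal_mul_diagonal, Matrix.diagonal_mul_diagonal]
    refine congrArg Matrix.diagonal (funext fun j => ?_)
    have habs0 : (‖d j‖ : ℂ) ≠ 0 := by
      rw [ne_eq, Complex.ofReal_eq_zero]
      exact (norm_pos_iff.mpr (hdne j)).ne'
    have hsq : ((Real.sqrt (‖d j‖) : ℝ) : ℂ) * ((Real.sqrt (‖d j‖) : ℝ) : ℂ)
        = (‖d j‖ : ℂ) := by
      rw [← Complex.ofReal_mul, Real.mul_self_sqrt (norm_nonneg _)]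
    calc ((Real.sqrt (‖d j‖) : ℝ) : ℂ) * (d j / (‖d j‖ : ℂ))
          * ((Real.sqrt (‖d j‖) : ℝ) : ℂ)
        = (((Real.sqrt (‖d j‖) : ℝ) : ℂ) * ((Real.sqrt (‖d j‖) : ℝ) : ℂ))
          * (d j / (‖d j‖ : ℂ)) := by ring
      _ = (‖d j‖ : ℂ) * (d j / (‖d j‖ : ℂ)) := by rw [hsq]
      _ = d j := by field_simp
  have h1X : (1 : Matrix ι ι ℂ) + Complex.I • X
      = U * ((1 : Matrix ι ι ℂ) + Complex.I • Matrix.diagonal (RCLike.ofReal ∘ lam)) * star U := by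
    rw [mul_add, add_mul, mul_one, hUU, Matrix.mul_smul, Matrix.smul_mul, ← hspec]
  have hC'LXL : C' = L * ((1 : Matrix ι ι ℂ) + Complex.I • X) * L := by
    have h2 : L * ((1 : Matrix ι ι ℂ) + Complex.I • X) * L = H + Complex.I • (L * X * L) := by
      rw [mul_add, add_mul, mul_one, hLL, Matrix.mul_smul, Matrix.smul_mul]
    rw [h2, hLXL]
    exact hC'HK
  have hdecomp : C = Tᴴ * D * T := by
    rw [hTH, hT]
    calc C = Complex.exp ((γ:ℂ) * Complex.I) • C' := hCexp
      _ = L * U * (Complex.exp ((γ:ℂ) * Complex.I) •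
            ((1 : Matrix ι ι ℂ) + Complex.I • Matrix.diagonal (RCLike.ofReal ∘ lam)))
            * (star U * L) := by
          rw [hC'LXL, h1X]
          simp only [Matrix.mul_smul, Matrix.smul_mul, mul_assoc]
      _ = L * U * (R * D * R) * (star U * L) := by rw [hdiagd, hRDR]
      _ = L * U * R * (D * (R * (star U * L))) := by simp only [mul_assoc]
      _ = L * U * R * D * (R * (star U * L)) := by simp only [mul_assoc]
  refine ⟨T, D, hTunit, hD ▸ Matrix.isDiag_diagonal _, hdecomp, fun j => ?_⟩
  have hTdet : IsUnit T.det := (Matrix.isUnit_iff_isUnit_det T).mp hTunit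
  set e : ι → ℂ := Pi.single j 1 with he
  have he0 : e ≠ 0 := by
    intro h0
    have := congr_fun h0 j
    simp [he] at this
  set x : ι → ℂ := T⁻¹ *ᵥ e with hx
  have hTx : T *ᵥ x = e := by
    rw [hx, Matrix.mulVec_mulVec, Matrix.mul_nonsing_inv _ hTdet, Matrix.one_mulVec]
  have hx0 : x ≠ 0 := by
    intro h0
    apply he0
    rw [← hTx, h0, Matrix.mulVec_zero]
  have hqf : star x ⬝ᵥ C.mulVec x = D j j := by
    show star x ⬝ᵥ C *ᵥ x = D j j
    conv_lhs => rw [hdecomp]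
    rw [← Matrix.mulVec_mulVec, ← Matrix.mulVec_mulVec, Matrix.dotProduct_mulVec,
      ← Matrix.star_mulVec, hTx]
    have hse : star e = e := by
      funext i
      by_cases hij : i = j
      · subst hij; simp [he]
      · simp [he, Pi.single_apply, hij]
    rw [hse, hD]
    simp [Matrix.mulVec_diagonal, dotProduct, he, Pi.single_apply]
  obtain ⟨hmem, hne0⟩ := hQ x hx0
  rw [hqf] at hmem hne0
  obtain ⟨ρ, θ, hρ, hθ1, hθ2, heq⟩ := hmem
  have habs1 : ‖D j j‖ = 1 := by
    rw [hD, Matrix.diagonal_apply_eq, norm_div, Complex.norm_of_nonneg (norm_nonneg _),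
      div_self (norm_ne_zero_iff.mpr (hdne j))]
  have hρ1 : ρ = 1 := by
    have h3 := congr_arg (‖·‖) heq
    rw [habs1, norm_mul, Complex.norm_exp_ofReal_mul_I, mul_one,
      Complex.norm_of_nonneg hρ] at h3
    exact h3.symm
  exact ⟨θ, hθ1, hθ2, by rw [heq, hρ1, Complex.ofReal_one, one_mul]⟩

lemma star_sum_elim {m n : Type*} (v : m → ℂ) (w : n → ℂ) :
    star (Sum.elim v w) = Sum.elim (star v) (star w) := by
  funext i; cases i <;> rfl

lemma qf_fromBlocks {m n : Type*} [Fintype m] [Fintype n]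
    (A : Matrix m m ℂ) (B : Matrix m n ℂ) (Cc : Matrix n m ℂ) (Dd : Matrix n n ℂ)
    (v : m → ℂ) (w : n → ℂ) :
    star (Sum.elim v w) ⬝ᵥ (Matrix.fromBlocks A B Cc Dd) *ᵥ (Sum.elim v w)
      = star v ⬝ᵥ A *ᵥ v + star v ⬝ᵥ B *ᵥ w + (star w ⬝ᵥ Cc *ᵥ v + star w ⬝ᵥ Dd *ᵥ w) := by
  rw [star_sum_elim, Matrix.fromBlocks_mulVec, sumElim_dotProduct_sumElim,
    dotProduct_add, dotProduct_add]
  simp only [Sum.elim_comp_inl, Sum.elim_comp_inr]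

lemma elim_ne_zero_left {m n : Type*} {v : m → ℂ} (w : n → ℂ) (h : v ≠ 0) :
    Sum.elim v w ≠ 0 := by
  intro h0
  apply h
  funext i
  exact congr_fun h0 (Sum.inl i)

lemma elim_ne_zero_right {m n : Type*} (v : m → ℂ) {w : n → ℂ} (h : w ≠ 0) :
    Sum.elim v w ≠ 0 := by
  intro h0
  apply h
  funext i
  exact congr_fun h0 (Sum.inr i)

lemma qf_sector_of_qf {ι : Type*} [Fintype ι] {M : Matrix ι ι ℂ} {α β : ℝ} (hle : α ≤ β)
    (hQ : ∀ x : ι → ℂ, x ≠ 0 → star x ⬝ᵥ M.mulVec x ∈ sector α β ∧ star x ⬝ᵥ M.mulVec x ≠ 0)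
    (y : ι → ℂ) : star y ⬝ᵥ M.mulVec y ∈ sector α β := by
  by_cases hy : y = 0
  · rw [hy]
    have : star (0 : ι → ℂ) ⬝ᵥ M.mulVec 0 = 0 := by
      rw [star_zero, zero_dotProduct]
    rw [this]
    exact zero_mem_sector hle
  · exact (hQ y hy).1

end CasAux

theorem cascade_connection_preserves_phases {r s t : Type*}
    [Fintype r] [Fintype s] [Fintype t] [DecidableEq r] [DecidableEq s] [DecidableEq t]
    (Za : Matrix (r ⊕ s) (r ⊕ s) ℂ) (Zb : Matrix (s ⊕ t) (s ⊕ t) ℂ) (α β : ℝ)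
    (hαβ : β - α < Real.pi) (ha : MemZ Za α β) (hb : MemZ Zb α β) :
    IsUnit (Za.toBlocks₂₂ + Zb.toBlocks₁₁) ∧
      MemZ (Matrix.fromBlocks
        (Za.toBlocks₁₁ - Za.toBlocks₁₂ * (Za.toBlocks₂₂ + Zb.toBlocks₁₁)⁻¹ * Za.toBlocks₂₁)
        (Za.toBlocks₁₂ * (Za.toBlocks₂₂ + Zb.toBlocks₁₁)⁻¹ * Zb.toBlocks₁₂)
        (Zb.toBlocks₂₁ * (Za.toBlocks₂₂ + Zb.toBlocks₁₁)⁻¹ * Za.toBlocks₂₁)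
        (Zb.toBlocks₂₂ - Zb.toBlocks₂₁ * (Za.toBlocks₂₂ + Zb.toBlocks₁₁)⁻¹ * Zb.toBlocks₁₂))
        α β := by
  classical
  have hQa : ∀ x : r ⊕ s → ℂ, x ≠ 0 →
      star x ⬝ᵥ Za.mulVec x ∈ sector α β ∧ star x ⬝ᵥ Za.mulVec x ≠ 0 :=
    fun x hx => CasAux.qf_of_memZ ha hαβ hx
  have hQb : ∀ x : s ⊕ t → ℂ, x ≠ 0 →
      star x ⬝ᵥ Zb.mulVec x ∈ sector α β ∧ star x ⬝ᵥ Zb.mulVec x ≠ 0 :=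
    fun x hx => CasAux.qf_of_memZ hb hαβ hx
  set E : Matrix s s ℂ := Za.toBlocks₂₂ + Zb.toBlocks₁₁ with hE
  have hqE : ∀ u : s → ℂ, star u ⬝ᵥ E *ᵥ u
      = star (Sum.elim (0 : r → ℂ) u) ⬝ᵥ Za *ᵥ (Sum.elim 0 u)
        + star (Sum.elim u (0 : t → ℂ)) ⬝ᵥ Zb *ᵥ (Sum.elim u 0) := by
    intro u
    conv_rhs => rw [← Matrix.fromBlocks_toBlocks Za, ← Matrix.fromBlocks_toBlocks Zb]
    rw [CasAux.qf_fromBlocks, CasAux.qf_fromBlocks]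
    simp only [star_zero, zero_dotProduct, Matrix.mulVec_zero, dotProduct_zero,
      zero_add, add_zero]
    rw [hE, Matrix.add_mulVec, dotProduct_add]
  have hQE : ∀ u : s → ℂ, u ≠ 0 →
      star u ⬝ᵥ E *ᵥ u ∈ sector α β ∧ star u ⬝ᵥ E *ᵥ u ≠ 0 := by
    intro u hu
    rw [hqE]
    have h1 := hQa _ (CasAux.elim_ne_zero_right 0 hu)
    have h2 := hQb _ (CasAux.elim_ne_zero_left 0 hu)
    exact CasAux.sector_add_of hαβ h1.1 h2.1 (Or.inl h1.2)
  have hEunit : IsUnit E := by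
    rw [← Matrix.mulVec_injective_iff_isUnit]
    intro a b hab
    by_contra hne
    have hu : a - b ≠ 0 := sub_ne_zero.mpr hne
    have h0 : E *ᵥ (a - b) = 0 := by
      rw [Matrix.mulVec_sub, show E.mulVec a = E.mulVec b from hab, sub_self]
    have h1 := (hQE _ hu).2
    rw [h0, dotProduct_zero] at h1
    exact h1 rfl
  have hEdet : IsUnit E.det := (Matrix.isUnit_iff_isUnit_det E).mp hEunit
  refine ⟨hEunit, ?_⟩
  apply CasAux.memZ_of_qf hαβ
  intro x hx
  set v : r → ℂ := x ∘ Sum.inl with hv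
  set w : t → ℂ := x ∘ Sum.inr with hw
  have hxvw : x = Sum.elim v w := by funext i; cases i <;> rfl
  set p : s → ℂ := E⁻¹ *ᵥ (Za.toBlocks₂₁ *ᵥ v - Zb.toBlocks₁₂ *ᵥ w) with hp
  have hEp : E *ᵥ p = Za.toBlocks₂₁ *ᵥ v - Zb.toBlocks₁₂ *ᵥ w := by
    rw [hp, Matrix.mulVec_mulVec, Matrix.mul_nonsing_inv _ hEdet, Matrix.one_mulVec]
  have hcollapse : star p ⬝ᵥ Za.toBlocks₂₂ *ᵥ p
      = star p ⬝ᵥ (Za.toBlocks₂₁ *ᵥ v) - star p ⬝ᵥ (Zb.toBlocks₁₂ *ᵥ w)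
        - star p ⬝ᵥ Zb.toBlocks₁₁ *ᵥ p := by
    have h1 : star p ⬝ᵥ Za.toBlocks₂₂ *ᵥ p + star p ⬝ᵥ Zb.toBlocks₁₁ *ᵥ p
        = star p ⬝ᵥ (Za.toBlocks₂₁ *ᵥ v) - star p ⬝ᵥ (Zb.toBlocks₁₂ *ᵥ w) := by
      rw [← dotProduct_add, ← Matrix.add_mulVec, ← hE, hEp, dotProduct_sub]
    linear_combination h1
  have hpexp : p = E⁻¹ *ᵥ (Za.toBlocks₂₁ *ᵥ v) - E⁻¹ *ᵥ (Zb.toBlocks₁₂ *ᵥ w) := by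
    rw [hp, Matrix.mulVec_sub]
  have key : star x ⬝ᵥ (Matrix.fromBlocks
        (Za.toBlocks₁₁ - Za.toBlocks₁₂ * E⁻¹ * Za.toBlocks₂₁)
        (Za.toBlocks₁₂ * E⁻¹ * Zb.toBlocks₁₂)
        (Zb.toBlocks₂₁ * E⁻¹ * Za.toBlocks₂₁)
        (Zb.toBlocks₂₂ - Zb.toBlocks₂₁ * E⁻¹ * Zb.toBlocks₁₂)).mulVec x
      = star (Sum.elim v (-p)) ⬝ᵥ Za *ᵥ (Sum.elim v (-p))
        + star (Sum.elim p w) ⬝ᵥ Zb *ᵥ (Sum.elim p w) := by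
    conv_rhs => rw [← Matrix.fromBlocks_toBlocks Za, ← Matrix.fromBlocks_toBlocks Zb]
    rw [hxvw]
    show star (Sum.elim v w) ⬝ᵥ (Matrix.fromBlocks _ _ _ _) *ᵥ (Sum.elim v w) = _
    rw [CasAux.qf_fromBlocks, CasAux.qf_fromBlocks, CasAux.qf_fromBlocks]
    simp only [star_neg, neg_dotProduct, Matrix.mulVec_neg, dotProduct_neg,
      neg_neg]
    rw [hcollapse]
    conv_rhs => rw [hpexp]
    simp only [Matrix.sub_mulVec, Matrix.mulVec_sub, dotProduct_sub,
      ← Matrix.mulVec_mulVec]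
    ring
  rw [key]
  have hvw : v ≠ 0 ∨ w ≠ 0 := by
    by_contra hcon
    push_neg at hcon
    exact hx (by rw [hxvw, hcon.1, hcon.2]; funext i; cases i <;> rfl)
  rcases hvw with hv0 | hw0
  · have h1 := hQa _ (CasAux.elim_ne_zero_left (-p) hv0)
    have hle : α ≤ β := CasAux.le_of_mem_sector h1.1
    have h2 := CasAux.qf_sector_of_qf hle hQb (Sum.elim p w)
    exact CasAux.sector_add_of hαβ h1.1 h2 (Or.inl h1.2)
  · have h2 := hQb _ (CasAux.elim_ne_zero_right p hw0)
    have hle : α ≤ β := CasAux.le_of_mem_sector h2.1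
    have h1 := CasAux.qf_sector_of_qf hle hQa (Sum.elim v (-p))
    exact CasAux.sector_add_of hαβ h1 h2.1 (Or.inr h2.2)
end
end
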